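/- Let K be a set of q^2+2q+1 points in PG(4,q), q ≥ 3, such that every 3-space meets K in either one, two or three lines, a line and a non-degenerate conic, or a twisted cubic. Then K contains at least one non-degenerate conic. -/

import Mathlib

open Projectivization

variable (F : Type) [Field F] [Fintype F]

/-- The points of the projective space `PG(n,q)` over a field `F` (of order `q`). -/
abbrev PGPt (n : ℕ) := Projectivization F (Fin (n + 1) → F)

/-- `S` is a projective subspace of (projective) dimension `d` of `PG(n,q)`. -/
def IsSubsp (n d : ℕ) (S : Set (PGPt F n)) : Prop :=
  ∃ W : Submodule F (Fin (n + 1) → F), Module.finrank F W = d + 1 ∧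
    S = {p | p.submodule ≤ W}

/-- A line of `PG(n,q)`. -/
abbrev IsLine (n : ℕ) (S : Set (PGPt F n)) : Prop := IsSubsp F n 1 S

/-- A plane of `PG(n,q)`. -/
abbrev IsPlane (n : ℕ) (S : Set (PGPt F n)) : Prop := IsSubsp F n 2 S

/-- A 3-space (hyperplane) of `PG(4,q)`. -/
abbrev IsSolid (S : Set (PGPt F 4)) : Prop := IsSubsp F 4 3 S

/-- A non-degenerate conic of `PG(n,q)` : the image of the standard conic
`{[a² : ab : b²]}` of `PG(2,q)` under an injective linear map. -/
def IsConic (n : ℕ) (C : Set (PGPt F n)) : Prop :=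
  ∃ f : (Fin 3 → F) →ₗ[F] (Fin (n + 1) → F), Function.Injective f ∧
    C = {p | ∃ a b : F, (a ≠ 0 ∨ b ≠ 0) ∧
      p.submodule = Submodule.span F {f ![a ^ 2, a * b, b ^ 2]}}

/-- A twisted cubic of `PG(n,q)` : the image of the standard twisted cubic
`{[a³ : a²b : ab² : b³]}` of `PG(3,q)` under an injective linear map. -/
def IsTwistedCubic (n : ℕ) (C : Set (PGPt F n)) : Prop :=
  ∃ f : (Fin 4 → F) →ₗ[F] (Fin (n + 1) → F), Function.Injective f ∧
    C = {p | ∃ a b : F, (a ≠ 0 ∨ b ≠ 0) ∧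
      p.submodule = Submodule.span F {f ![a ^ 3, a ^ 2 * b, a * b ^ 2, b ^ 3]}}

/-- A ruled cubic surface of `PG(4,q)` : the image, under a projective transformation,
of the standard scroll ruling the line `{[a : b : 0 : 0 : 0]}` and the conic
`{[0 : 0 : a² : ab : b²]}` according to a projectivity (normalized to the identity). -/
def IsRuledCubicSurface (K : Set (PGPt F 4)) : Prop :=
  ∃ g : (Fin 5 → F) ≃ₗ[F] (Fin 5 → F),
    K = {p | ∃ a b s t : F, (a ≠ 0 ∨ b ≠ 0) ∧ (s ≠ 0 ∨ t ≠ 0) ∧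
      p.submodule = Submodule.span F {g ![s * a, s * b, t * a ^ 2, t * (a * b), t * b ^ 2]}}

/-- The intersection of the 3-space `Pi` with `K` is one line. -/
def TypeOneLine (K Pi : Set (PGPt F 4)) : Prop :=
  ∃ ℓ, IsLine F 4 ℓ ∧ K ∩ Pi = ℓ

/-- The intersection of the 3-space `Pi` with `K` is two (distinct) lines. -/
def TypeTwoLines (K Pi : Set (PGPt F 4)) : Prop :=
  ∃ ℓ m, IsLine F 4 ℓ ∧ IsLine F 4 m ∧ ℓ ≠ m ∧ K ∩ Pi = ℓ ∪ m

/-- The intersection of the 3-space `Pi` with `K` is three (distinct) lines. -/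
def TypeThreeLines (K Pi : Set (PGPt F 4)) : Prop :=
  ∃ ℓ m n, IsLine F 4 ℓ ∧ IsLine F 4 m ∧ IsLine F 4 n ∧
    ℓ ≠ m ∧ ℓ ≠ n ∧ m ≠ n ∧ K ∩ Pi = ℓ ∪ m ∪ n

/-- The intersection of the 3-space `Pi` with `K` is a line and a non-degenerate conic. -/
def TypeLineConic (K Pi : Set (PGPt F 4)) : Prop :=
  ∃ ℓ C, IsLine F 4 ℓ ∧ IsConic F 4 C ∧ K ∩ Pi = ℓ ∪ C

/-- The intersection of the 3-space `Pi` with `K` is a twisted cubic. -/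
def TypeTwistedCubic (K Pi : Set (PGPt F 4)) : Prop :=
  ∃ C, IsTwistedCubic F 4 C ∧ K ∩ Pi = C

/-- The intersection of the 3-space `Pi` with `K` is a single point. -/
def TypePoint (K Pi : Set (PGPt F 4)) : Prop :=
  ∃ P, K ∩ Pi = {P}

/-- The intersection of the 3-space `Pi` with `K` is a non-degenerate conic and two lines. -/
def TypeConicTwoLines (K Pi : Set (PGPt F 4)) : Prop :=
  ∃ C ℓ m, IsConic F 4 C ∧ IsLine F 4 ℓ ∧ IsLine F 4 m ∧ ℓ ≠ m ∧ K ∩ Pi = C ∪ ℓ ∪ m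

/-- The intersection of the 3-space `Pi` with `K` is a line and a twisted cubic. -/
def TypeLineTwistedCubic (K Pi : Set (PGPt F 4)) : Prop :=
  ∃ ℓ C, IsLine F 4 ℓ ∧ IsTwistedCubic F 4 C ∧ K ∩ Pi = ℓ ∪ C

/-- Every 3-space meets `K` in one, two or three lines, a line and a
non-degenerate conic, or a twisted cubic. -/
def FiveTypeHyp (K : Set (PGPt F 4)) : Prop :=
  ∀ Pi, IsSolid F Pi →
    TypeOneLine F K Pi ∨ TypeTwoLines F K Pi ∨ TypeThreeLines F K Pi ∨
      TypeLineConic F K Pi ∨ TypeTwistedCubic F K Pi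

/-- Every 3-space meets `K` in one of the eight allowed types. -/
def EightTypeHyp (K : Set (PGPt F 4)) : Prop :=
  ∀ Pi, IsSolid F Pi →
    TypeOneLine F K Pi ∨ TypeTwoLines F K Pi ∨ TypeThreeLines F K Pi ∨
      TypeLineConic F K Pi ∨ TypeTwistedCubic F K Pi ∨
      TypePoint F K Pi ∨ TypeConicTwoLines F K Pi ∨ TypeLineTwistedCubic F K Pi

/-- `m` lists the `q+1` sticks of `K` (pairwise skew lines partitioning `K`) and `b` is
the baseline: a further line of `K` meeting every stick. -/
def SticksAndBase (q : ℕ) (K : Set (PGPt F 4)) (m : Fin (q + 1) → Set (PGPt F 4))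
    (b : Set (PGPt F 4)) : Prop :=
  (∀ i, IsLine F 4 (m i)) ∧ (∀ i j, i ≠ j → Disjoint (m i) (m j)) ∧ (⋃ i, m i) = K ∧
    IsLine F 4 b ∧ b ⊆ K ∧ (∀ i, b ≠ m i) ∧ (∀ i, (b ∩ m i).Nonempty)


open Projectivization Module Submodule
open scoped LinearAlgebra.Projectivization

set_option linter.unusedSectionVars false

namespace PGaux

instance instFiniteProj (F V : Type) [Field F] [AddCommGroup V] [Module F V] [Finite V] :
    Finite (ℙ F V) := Quotient.finite _

section ncardlemmas
variable {α : Type} [Finite α] {ι : Type}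

lemma ncard_biUnion_le (s : Finset ι) (A : ι → Set α) :
    (⋃ i ∈ s, A i).ncard ≤ ∑ i ∈ s, (A i).ncard := by
  classical
  induction s using Finset.induction_on with
  | empty => simp
  | insert a s hni ih =>
    rw [Finset.set_biUnion_insert, Finset.sum_insert hni]
    exact le_trans (Set.ncard_union_le _ _)
      (Nat.add_le_add_left ih _)

lemma exists_two_distinct {S : Set α} (h : 2 ≤ S.ncard) :
    ∃ a ∈ S, ∃ b ∈ S, a ≠ b := by
  obtain ⟨a, ha⟩ := Set.nonempty_of_ncard_ne_zero (s := S) (by omega)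
  have h2 : (S \ {a}).ncard = S.ncard - 1 := Set.ncard_diff_singleton_of_mem ha
  have h3 : (S \ {a}).ncard ≠ 0 := by rw [h2]; omega
  obtain ⟨b, hb⟩ : (S \ {a}).Nonempty := Set.nonempty_of_ncard_ne_zero h3
  exact ⟨a, ha, b, hb.1, fun h => hb.2 (by rw [h]; rfl)⟩

lemma exists_three_distinct {S : Set α} (h : 3 ≤ S.ncard) :
    ∃ a ∈ S, ∃ b ∈ S, ∃ c ∈ S, a ≠ b ∧ a ≠ c ∧ b ≠ c := by
  obtain ⟨a, ha⟩ := Set.nonempty_of_ncard_ne_zero (s := S) (by omega)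
  have h2 : (S \ {a}).ncard = S.ncard - 1 := Set.ncard_diff_singleton_of_mem ha
  have h3 : 2 ≤ (S \ {a}).ncard := by rw [h2]; omega
  obtain ⟨b, hb, c, hc, hbc⟩ := exists_two_distinct h3
  refine ⟨a, ha, b, hb.1, c, hc.1, ?_, ?_, hbc⟩
  · exact fun h => hb.2 (by rw [← h]; rfl)
  · exact fun h => hc.2 (by rw [← h]; rfl)

lemma exists_four_distinct {S : Set α} (h : 4 ≤ S.ncard) :
    ∃ a ∈ S, ∃ b ∈ S, ∃ c ∈ S, ∃ d ∈ S,
      a ≠ b ∧ a ≠ c ∧ a ≠ d ∧ b ≠ c ∧ b ≠ d ∧ c ≠ d := by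
  obtain ⟨a, ha⟩ := Set.nonempty_of_ncard_ne_zero (s := S) (by omega)
  have h2 : (S \ {a}).ncard = S.ncard - 1 := Set.ncard_diff_singleton_of_mem ha
  have h3 : 3 ≤ (S \ {a}).ncard := by rw [h2]; omega
  obtain ⟨b, hb, c, hc, d, hd, hbc, hbd, hcd⟩ := exists_three_distinct h3
  refine ⟨a, ha, b, hb.1, c, hc.1, d, hd.1, ?_, ?_, ?_, hbc, hbd, hcd⟩
  · exact fun h => hb.2 (by rw [← h]; rfl)
  · exact fun h => hc.2 (by rw [← h]; rfl)
  · exact fun h => hd.2 (by rw [← h]; rfl)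

lemma card_le_ncard_of_inj {ι : Type} [Fintype ι] {f : ι → α} {N : Set α}
    (hinj : Function.Injective f) (hsub : ∀ i, f i ∈ N) :
    Fintype.card ι ≤ N.ncard := by
  have : (Set.range f).ncard = Fintype.card ι := by
    rw [← Set.image_univ, Set.ncard_image_of_injective _ hinj, Set.ncard_univ,
      Nat.card_eq_fintype_card]
  rw [← this]
  exact Set.ncard_le_ncard (Set.range_subset_iff.mpr hsub) (Set.toFinite _)

lemma exists_eq_of_card_lt {ι : Type} [Fintype ι] {f : ι → α} {N : Set α}
    (hsub : ∀ i, f i ∈ N) (hlt : N.ncard < Fintype.card ι) :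
    ∃ i j, i ≠ j ∧ f i = f j := by
  by_contra hc
  push_neg at hc
  have hinj : Function.Injective f := by
    intro i j h
    by_contra hne
    exact (hc i j hne) h
  exact absurd (card_le_ncard_of_inj hinj hsub) (by omega)

/-- cardinality of a "cone": union of a finite family of sets of size `k+1`,
through a common point `P`, pairwise meeting exactly at `P`. -/
lemma ncard_sUnion_cone {k : ℕ} (T : Finset (Set α)) (hne : T.Nonempty) (P : α)
    (hcard : ∀ ℓ ∈ T, Set.ncard ℓ = k + 1) (hP : ∀ ℓ ∈ T, P ∈ ℓ)
    (hpair : ∀ ℓ ∈ T, ∀ m ∈ T, ℓ ≠ m → ℓ ∩ m = {P}) :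
    (⋃₀ (T : Set (Set α))).ncard = 1 + T.card * k := by
  classical
  induction T using Finset.induction_on with
  | empty => exact absurd hne (by simp)
  | insert ℓ T hni ih =>
    rcases T.eq_empty_or_nonempty with rfl | hTne
    · simp only [insert_empty_eq, Finset.coe_singleton, Set.sUnion_singleton,
        Finset.card_singleton, one_mul]
      rw [hcard ℓ (by simp)]
      omega
    · have hmemins : ∀ m ∈ T, m ∈ insert ℓ T := fun m hm => Finset.mem_insert_of_mem hm
      have hℓmem : ℓ ∈ insert ℓ T := Finset.mem_insert_self _ _
      have ihv := ih hTne (fun m hm => hcard m (hmemins m hm)) (fun m hm => hP m (hmemins m hm))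
        (fun m hm m' hm' => hpair m (hmemins m hm) m' (hmemins m' hm'))
      have hsU : (⋃₀ ((insert ℓ T : Finset (Set α)) : Set (Set α)))
          = ℓ ∪ ⋃₀ (T : Set (Set α)) := by
        simp [Set.sUnion_insert]
      have hinter : ℓ ∩ ⋃₀ (T : Set (Set α)) = {P} := by
        apply le_antisymm
        · rintro x ⟨hxl, m, hm, hxm⟩
          have hne' : ℓ ≠ m := by
            rintro rfl; exact hni hm
          have := hpair ℓ hℓmem m (hmemins m hm) hne'
          rw [← this]; exact ⟨hxl, hxm⟩
        · rintro x hx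
          rcases hx with rfl
          obtain ⟨m, hm⟩ := hTne
          exact ⟨hP ℓ hℓmem, m, hm, hP m (hmemins m hm)⟩
      have hdiff : ℓ \ ⋃₀ (T : Set (Set α)) = ℓ \ {P} := by
        rw [← hinter]
        ext x
        simp only [Set.mem_diff, Set.mem_inter_iff]
        tauto
      have hcnt : (ℓ \ ⋃₀ (T : Set (Set α))).ncard = k := by
        rw [hdiff, Set.ncard_diff_singleton_of_mem (hP ℓ hℓmem),
          hcard ℓ hℓmem]
        omega
      rw [hsU]
      have : (ℓ ∪ ⋃₀ (T : Set (Set α))) = (ℓ \ ⋃₀ (T : Set (Set α))) ∪ ⋃₀ (T : Set (Set α)) := by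
        rw [Set.diff_union_self]
      rw [this, Set.ncard_union_eq (Set.disjoint_sdiff_left) (Set.toFinite _) (Set.toFinite _),
        hcnt, ihv, Finset.card_insert_of_notMem hni]
      ring



end ncardlemmas

section geom
variable {F : Type} [Field F] {V : Type} [AddCommGroup V] [Module F V]

/-- The set of projective points inside a submodule. -/
def pts (W : Submodule F V) : Set (ℙ F V) := {p | p.submodule ≤ W}

lemma mem_pts {W : Submodule F V} {p : ℙ F V} : p ∈ pts W ↔ p.submodule ≤ W := Iff.rfl

lemma rep_mem_iff {W : Submodule F V} {p : ℙ F V} : p.rep ∈ W ↔ p ∈ pts W := by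
  rw [mem_pts, p.submodule_eq, Submodule.span_singleton_le_iff_mem]

lemma mk_mem_pts {W : Submodule F V} {v : V} (hv : v ≠ 0) :
    Projectivization.mk F v hv ∈ pts W ↔ v ∈ W := by
  rw [mem_pts, Projectivization.submodule_mk, Submodule.span_singleton_le_iff_mem]

lemma pts_mono {W W' : Submodule F V} (h : W ≤ W') : pts W ⊆ pts W' :=
  fun _ hp => le_trans hp h

lemma pts_le_iff {W W' : Submodule F V} : pts (F := F) W ⊆ pts W' ↔ W ≤ W' := by
  refine ⟨fun h v hv => ?_, pts_mono⟩
  rcases eq_or_ne v 0 with rfl | hv0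
  · exact W'.zero_mem
  · exact (mk_mem_pts hv0).mp (h ((mk_mem_pts hv0).mpr hv))

lemma pts_inj {W W' : Submodule F V} (h : pts (F := F) W = pts W') : W = W' :=
  le_antisymm (pts_le_iff.mp h.le) (pts_le_iff.mp h.ge)

lemma pts_inter {W W' : Submodule F V} : pts (F := F) (W ⊓ W') = pts W ∩ pts W' := by
  ext p; simp [mem_pts, le_inf_iff, Set.mem_inter_iff]

/-- the point corresponding to a rank-1 submodule -/
lemma pts_rank_one [FiniteDimensional F V] {X : Submodule F V} (h : finrank F X = 1) :
    pts (F := F) X = {Projectivization.mk'' X h} := by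
  ext p
  simp only [mem_pts, Set.mem_singleton_iff]
  constructor
  · intro hle
    have : p.submodule = X := eq_of_le_of_finrank_le hle (by rw [h, p.finrank_submodule])
    have := Projectivization.submodule_injective (V := V)
      (this.trans (Projectivization.submodule_mk'' X h).symm)
    exact this
  · rintro rfl; rw [Projectivization.submodule_mk'' X h]



variable [FiniteDimensional F V]


/-- rank of sup with a fresh 1-dim piece -/
lemma finrank_sup_point {W : Submodule F V} {p : ℙ F V} (hp : p ∉ pts W) :
    finrank F ((W ⊔ p.submodule : Submodule F V) : Submodule F V) = finrank F W + 1 := by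
  have hinf : W ⊓ p.submodule = ⊥ := by
    by_contra h
    have h1 : finrank F (W ⊓ p.submodule : Submodule F V) ≤ 1 := by
      simpa [p.finrank_submodule] using
        Submodule.finrank_mono (inf_le_right : W ⊓ p.submodule ≤ p.submodule)
    have h2 : 0 < finrank F (W ⊓ p.submodule : Submodule F V) := by
      rw [Nat.pos_iff_ne_zero]
      intro h0
      exact h (Submodule.finrank_eq_zero.mp h0)
    have h3 : finrank F (W ⊓ p.submodule : Submodule F V) = finrank F p.submodule := by
      rw [p.finrank_submodule]; omega
    have := eq_of_le_of_finrank_eq (inf_le_right : W ⊓ p.submodule ≤ p.submodule) h3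
    exact hp (le_trans this.ge inf_le_left)
  have := Submodule.finrank_sup_add_finrank_inf_eq W p.submodule
  rw [hinf] at this
  simp only [finrank_bot, add_zero, p.finrank_submodule] at this
  omega

/-- distinct points span a rank-2 submodule -/
lemma finrank_sup_two {p q : ℙ F V} (h : p ≠ q) :
    finrank F ((p.submodule ⊔ q.submodule : Submodule F V)) = 2 := by
  have hq : q ∉ pts p.submodule := by
    intro hle
    exact h (Projectivization.submodule_injective
      (eq_of_le_of_finrank_eq hle (by rw [p.finrank_submodule, q.finrank_submodule])).symm)
  have := finrank_sup_point (W := p.submodule) hq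
  rwa [p.finrank_submodule] at this

/-- extension of a submodule to any larger finrank -/
lemma exists_supmodule {W : Submodule F V} {k : ℕ} (h1 : finrank F W ≤ k)
    (h2 : k ≤ finrank F V) : ∃ W' : Submodule F V, W ≤ W' ∧ finrank F W' = k := by
  induction k with
  | zero => exact ⟨W, le_rfl, by omega⟩
  | succ n ih =>
    rcases Nat.lt_or_ge (finrank F W) (n+1) with hlt | hge
    · obtain ⟨W', hle, hrk⟩ := ih (by omega) (by omega)
      have hne : W' ≠ ⊤ := by
        intro hW; rw [hW, finrank_top] at hrk; omega
      obtain ⟨v, hv⟩ : ∃ v, v ∉ W' := by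
        by_contra hc; push_neg at hc
        exact hne (Submodule.eq_top_iff'.mpr hc)
      have hv0 : v ≠ 0 := fun h0 => hv (h0 ▸ W'.zero_mem)
      refine ⟨W' ⊔ (Projectivization.mk F v hv0).submodule, le_trans hle le_sup_left, ?_⟩
      have : Projectivization.mk F v hv0 ∉ pts W' := by
        simp only [pts, Set.mem_setOf_eq, Projectivization.submodule_mk,
          Submodule.span_singleton_le_iff_mem]
        exact hv
      rw [finrank_sup_point this, hrk]
    · exact ⟨W, le_rfl, by omega⟩

/-- a rank-2 submodule containing two distinct points is their sup -/
lemma line_eq_sup {W : Submodule F V} (hW : finrank F W = 2) {p q : ℙ F V} (hpq : p ≠ q)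
    (hp : p ∈ pts W) (hq : q ∈ pts W) : W = p.submodule ⊔ q.submodule :=
  (eq_of_le_of_finrank_eq (sup_le hp hq) (by rw [finrank_sup_two hpq, hW])).symm

/-- two distinct rank-2 submodules share at most the one point -/
lemma line_inter_subsingleton {W W' : Submodule F V} (hW : finrank F W = 2)
    (hW' : finrank F W' = 2) (hne : W ≠ W') {p q : ℙ F V} (hp : p ∈ pts W ∩ pts W')
    (hq : q ∈ pts W ∩ pts W') : p = q := by
  by_contra hpq
  have h1 : W = p.submodule ⊔ q.submodule := line_eq_sup hW hpq hp.1 hq.1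
  have h2 : W' = p.submodule ⊔ q.submodule := line_eq_sup hW' hpq hp.2 hq.2
  exact hne (h1.trans h2.symm)


lemma basis_pair {W : Submodule F V} (hW : finrank F W = 2) :
    ∃ u : Fin 2 → V, (∀ i, u i ∈ W) ∧
      (∀ a b : F, a • u 0 + b • u 1 = 0 → a = 0 ∧ b = 0) ∧
      (∀ w ∈ W, ∃ a b : F, w = a • u 0 + b • u 1) := by
  have b := (Module.finBasis F W).reindex (finCongr hW)
  refine ⟨fun i => (b i : V), fun i => (b i).2, ?_, ?_⟩
  · intro a c habc
    have hli : LinearIndependent F (fun i => ((b i : W) : V)) :=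
      b.linearIndependent.map' W.subtype (Submodule.ker_subtype W)
    have := Fintype.linearIndependent_iff.mp hli ![a, c] ?_
    · exact ⟨this 0, this 1⟩
    · rw [Fin.sum_univ_two]; simpa using habc
  · intro w hw
    have hrep := b.sum_repr ⟨w, hw⟩
    refine ⟨b.repr ⟨w, hw⟩ 0, b.repr ⟨w, hw⟩ 1, ?_⟩
    have h2 := congrArg (Subtype.val) hrep
    rw [Fin.sum_univ_two] at h2
    push_cast at h2
    exact h2.symm

lemma nz_of_indep {u : Fin 2 → V}
    (hind : ∀ a b : F, a • u 0 + b • u 1 = 0 → a = 0 ∧ b = 0)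
    {a b : F} (h : a ≠ 0 ∨ b ≠ 0) : a • u 0 + b • u 1 ≠ 0 := by
  intro h0
  obtain ⟨rfl, rfl⟩ := hind _ _ h0
  simp at h

lemma ncard_pts_line [Fintype F] {W : Submodule F V} (hW : finrank F W = 2) :
    (pts W).ncard = Fintype.card F + 1 := by
  classical
  obtain ⟨u, humem, hind, hspan⟩ := basis_pair hW
  have nz1 : ∀ t : F, u 0 + t • u 1 ≠ 0 := by
    intro t h0
    have : (1:F) • u 0 + t • u 1 = 0 := by rw [one_smul]; exact h0
    exact one_ne_zero (hind _ _ this).1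
  have nz2 : u 1 ≠ 0 := by
    intro h0
    have : (0:F) • u 0 + (1:F) • u 1 = 0 := by simp [h0]
    exact one_ne_zero (hind _ _ this).2
  set φ : Option F → ℙ F V := fun o =>
    Option.rec (Projectivization.mk F (u 1) nz2)
      (fun t => Projectivization.mk F (u 0 + t • u 1) (nz1 t)) o with hφ
  have hrange : pts W = Set.range φ := by
    ext p
    constructor
    · intro hp
      have hm : p.rep ∈ W := by
        have hle : p.submodule ≤ W := hp
        rw [p.submodule_eq, Submodule.span_singleton_le_iff_mem] at hle
        exact hle
      obtain ⟨a, b, hab⟩ := hspan p.rep hm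
      have hrep0 : p.rep ≠ 0 := Projectivization.rep_nonzero p
      have hmkp : Projectivization.mk F p.rep hrep0 = p := Projectivization.mk_rep p
      rcases eq_or_ne a 0 with rfl | ha
      · refine ⟨none, ?_⟩
        have hb : b ≠ 0 := by
          rintro rfl; rw [hab] at hrep0; simp at hrep0
        rw [hφ, ← hmkp]
        simp only
        rw [Projectivization.mk_eq_mk_iff]
        refine ⟨Units.mk0 b⁻¹ (inv_ne_zero hb), ?_⟩
        rw [Units.smul_def]
        simp only [Units.val_mk0]
        rw [hab, zero_smul, zero_add, smul_smul, inv_mul_cancel₀ hb, one_smul]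
      · refine ⟨some (a⁻¹ * b), ?_⟩
        rw [hφ, ← hmkp]
        simp only
        rw [Projectivization.mk_eq_mk_iff]
        refine ⟨Units.mk0 a⁻¹ (inv_ne_zero ha), ?_⟩
        rw [Units.smul_def]
        simp only [Units.val_mk0]
        rw [hab, smul_add, smul_smul, smul_smul, inv_mul_cancel₀ ha, one_smul]
    · rintro ⟨o, rfl⟩
      cases o with
      | none =>
        show (Projectivization.mk F (u 1) nz2).submodule ≤ W
        rw [Projectivization.submodule_mk, Submodule.span_singleton_le_iff_mem]
        exact humem 1
      | some t =>
        show (Projectivization.mk F (u 0 + t • u 1) (nz1 t)).submodule ≤ W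
        rw [Projectivization.submodule_mk, Submodule.span_singleton_le_iff_mem]
        exact W.add_mem (humem 0) (W.smul_mem _ (humem 1))
  have hinj : Function.Injective φ := by
    intro o o' hmk
    have hcase : ∀ s t : F, φ (some s) = φ (some t) → s = t := by
      intro s t h
      rw [hφ] at h
      simp only at h
      rw [Projectivization.mk_eq_mk_iff] at h
      obtain ⟨c, hc⟩ := h
      rw [Units.smul_def] at hc
      have e : ((c:F) - 1) • u 0 + ((c:F)*t - s) • u 1
          = (c:F) • (u 0 + t • u 1) - (u 0 + s • u 1) := by module
      rw [hc, sub_self] at e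
      obtain ⟨e1, e2⟩ := hind _ _ e
      have hc1 : (c : F) = 1 := sub_eq_zero.mp e1
      rw [hc1, one_mul] at e2
      exact (sub_eq_zero.mp e2).symm
    have hcase2 : ∀ s : F, φ (some s) ≠ φ none := by
      intro s h
      rw [hφ] at h
      simp only at h
      rw [Projectivization.mk_eq_mk_iff] at h
      obtain ⟨c, hc⟩ := h
      rw [Units.smul_def] at hc
      have e : ((0:F) - 1) • u 0 + ((c:F) - s) • u 1
          = (c:F) • (u 1) - (u 0 + s • u 1) := by module
      rw [hc, sub_self] at e
      have := (hind _ _ e).1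
      simp only [zero_sub, neg_eq_zero] at this
      exact one_ne_zero this
    match o, o' with
    | none, none => rfl
    | some s, some t => rw [hcase s t hmk]
    | some s, none => exact absurd hmk (hcase2 s)
    | none, some t => exact absurd hmk.symm (hcase2 t)
  rw [hrange, ← Set.image_univ, Set.ncard_image_of_injective _ hinj, Set.ncard_univ,
    Nat.card_eq_fintype_card, Fintype.card_option]


/-- The pencil of "hyperplanes" through a codimension-2 submodule. -/
lemma pencil {Wp : Submodule F V} (hcodim : finrank F V = finrank F Wp + 2) :
    ∃ sol : Option F → Submodule F V,
      (∀ o, Wp ≤ sol o ∧ finrank F (sol o) = finrank F Wp + 1) ∧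
      (∀ o o', o ≠ o' → sol o ⊓ sol o' = Wp) ∧
      (∀ v : V, ∃ o, v ∈ sol o) := by
  obtain ⟨U, hU⟩ := Submodule.exists_isCompl Wp
  have hrkU : finrank F U = 2 := by
    have := Submodule.finrank_add_eq_of_isCompl hU
    omega
  obtain ⟨u, humem, hind, hspan⟩ := basis_pair hrkU
  have hinf : Wp ⊓ U = ⊥ := disjoint_iff.mp hU.disjoint
  set w : Option F → V := fun o => Option.rec (u 1) (fun t => u 0 + t • u 1) o with hw
  have hwU : ∀ o, w o ∈ U := by
    intro o; cases o with
    | none => exact humem 1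
    | some t => exact U.add_mem (humem 0) (U.smul_mem _ (humem 1))
  have hwnz : ∀ o, w o ≠ 0 := by
    intro o; cases o with
    | none =>
      intro h0
      have : (0:F) • u 0 + (1:F) • u 1 = 0 := by simpa using h0
      exact one_ne_zero (hind _ _ this).2
    | some t =>
      intro h0
      have : (1:F) • u 0 + t • u 1 = 0 := by rw [one_smul]; exact h0
      exact one_ne_zero (hind _ _ this).1
  have hwnotin : ∀ o, w o ∉ Wp := by
    intro o hin
    have : w o ∈ Wp ⊓ U := ⟨hin, hwU o⟩
    rw [hinf] at this
    exact hwnz o this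
  have hkey : ∀ o o', o ≠ o' → ∀ c c' : F, c • w o = c' • w o' → c = 0 := by
    rintro (_|s) (_|t) hne c c' hcc <;> rw [hw] at hcc <;> simp only at hcc
    · exact absurd rfl hne
    · -- c • u 1 = c' • (u 0 + t • u 1)
      have e : c' • u 0 + (c' * t - c) • u 1 = 0 := by
        have : c' • u 0 + (c' * t - c) • u 1 = c' • (u 0 + t • u 1) - c • u 1 := by module
        rw [this, ← hcc, sub_self]
      rcases hind _ _ e with ⟨e1, e2⟩
      rw [e1, zero_mul, zero_sub, neg_eq_zero] at e2
      exact e2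
    · -- c • (u 0 + s • u 1) = c' • u 1
      have e : c • u 0 + (c * s - c') • u 1 = 0 := by
        have : c • u 0 + (c * s - c') • u 1 = c • (u 0 + s • u 1) - c' • u 1 := by module
        rw [this, hcc, sub_self]
      exact (hind _ _ e).1
    · -- c • (u 0 + s • u 1) = c' • (u 0 + t • u 1)
      have e : (c - c') • u 0 + (c * s - c' * t) • u 1 = 0 := by
        have : (c - c') • u 0 + (c * s - c' * t) • u 1
            = c • (u 0 + s • u 1) - c' • (u 0 + t • u 1) := by module
        rw [this, hcc, sub_self]
      rcases hind _ _ e with ⟨e1, e2⟩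
      have hcc' : c = c' := sub_eq_zero.mp e1
      rw [← hcc'] at e2
      have : c * (s - t) = 0 := by rw [mul_sub]; rw [sub_eq_zero] at e2 ⊢; exact e2
      rcases mul_eq_zero.mp this with h | h
      · exact h
      · exact absurd (by rw [sub_eq_zero.mp h]) hne
  refine ⟨fun o => Wp ⊔ Submodule.span F {w o}, fun o => ⟨le_sup_left, ?_⟩, ?_, ?_⟩
  · have : Projectivization.mk F (w o) (hwnz o) ∉ pts Wp := by
      intro hin
      rw [pts, Set.mem_setOf_eq, Projectivization.submodule_mk,
        Submodule.span_singleton_le_iff_mem] at hin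
      exact hwnotin o hin
    have := finrank_sup_point this
    rwa [Projectivization.submodule_mk] at this
  · intro o o' hne
    apply le_antisymm
    · rintro x ⟨hx1, hx2⟩
      obtain ⟨y, hy, r, hr, rfl⟩ := Submodule.mem_sup.mp hx1
      obtain ⟨c, rfl⟩ := Submodule.mem_span_singleton.mp hr
      obtain ⟨y', hy', r', hr', heq⟩ := Submodule.mem_sup.mp hx2
      obtain ⟨c', rfl⟩ := Submodule.mem_span_singleton.mp hr'
      have hdiff : c • w o - c' • w o' ∈ Wp := by
        have h2 : c • w o - c' • w o' = y' - y := by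
          rw [sub_eq_sub_iff_add_eq_add, add_comm]
          exact heq.symm
        rw [h2]
        exact Wp.sub_mem hy' hy
      have hdiffU : c • w o - c' • w o' ∈ U :=
        U.sub_mem (U.smul_mem _ (hwU o)) (U.smul_mem _ (hwU o'))
      have : c • w o - c' • w o' = 0 := by
        have : c • w o - c' • w o' ∈ Wp ⊓ U := ⟨hdiff, hdiffU⟩
        rwa [hinf] at this
      have hcc : c • w o = c' • w o' := by rwa [sub_eq_zero] at this
      have hc0 : c = 0 := hkey o o' hne c c' hcc
      rw [hc0, zero_smul, add_zero]
      exact hy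
    · exact le_inf le_sup_left le_sup_left
  · intro v
    have hv : v ∈ Wp ⊔ U := by
      rw [codisjoint_iff.mp hU.codisjoint]; trivial
    obtain ⟨y, hy, r, hr, rfl⟩ := Submodule.mem_sup.mp hv
    obtain ⟨a, b, rfl⟩ := hspan r hr
    rcases eq_or_ne a 0 with rfl | ha
    · refine ⟨none, Submodule.add_mem _ (le_sup_left (a := Wp) hy) ?_⟩
      rw [zero_smul, zero_add]
      exact le_sup_right (a := Wp) ((Submodule.span F {w none}).smul_mem b
        (Submodule.mem_span_singleton_self _))
    · refine ⟨some (a⁻¹ * b), Submodule.add_mem _ (le_sup_left (a := Wp) hy) ?_⟩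
      have : a • w (some (a⁻¹ * b)) = a • u 0 + b • u 1 := by
        rw [hw]; simp only
        rw [smul_add, smul_smul, mul_inv_cancel_left₀ ha]
      rw [← this]
      exact le_sup_right (a := Wp) ((Submodule.span F {w (some (a⁻¹*b))}).smul_mem a
        (Submodule.mem_span_singleton_self _))



end geom

section tc
variable {F : Type} [Field F] {V : Type} [AddCommGroup V] [Module F V]

/-- normalized twisted cubic parameter vectors -/
def vct (o : Option F) : Fin 4 → F :=
  Option.rec ![0,0,0,1] (fun t => ![1,t,t^2,t^3]) o

lemma vct_ne_zero (o : Option F) : vct o ≠ 0 := by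
  cases o with
  | none => intro h; have := congrFun h 3; simp [vct] at this
  | some t => intro h; have := congrFun h 0; simp [vct] at this

lemma tc_norm {a b : F} (hab : a ≠ 0 ∨ b ≠ 0) :
    ∃ o : Option F, ∃ c : F, c ≠ 0 ∧ (![a^3, a^2*b, a*b^2, b^3] : Fin 4 → F) = c • vct o := by
  rcases eq_or_ne a 0 with rfl | ha
  · have hb : b ≠ 0 := hab.resolve_left (fun h => h rfl)
    refine ⟨none, b^3, pow_ne_zero _ hb, ?_⟩
    funext i
    fin_cases i <;> simp [vct]
  · refine ⟨some (b/a), a^3, pow_ne_zero _ ha, ?_⟩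
    funext i
    fin_cases i <;> simp [vct] <;> field_simp <;> ring

/-- three distinct parameters give independent vectors -/
lemma vand3 {o₁ o₂ o₃ : Option F} (h12 : o₁ ≠ o₂) (h13 : o₁ ≠ o₃) (h23 : o₂ ≠ o₃) :
    LinearIndependent F ![vct o₁, vct o₂, vct o₃] := by
  rw [Fintype.linearIndependent_iff]
  intro g hg
  have h0 := congrFun hg 0
  have h1 := congrFun hg 1
  have h2 := congrFun hg 2
  have h3 := congrFun hg 3
  simp only [Fin.sum_univ_three, Matrix.cons_val_zero, Matrix.cons_val_one, Matrix.head_cons,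
    Pi.add_apply, Pi.smul_apply, smul_eq_mul, Pi.zero_apply] at h0 h1 h2 h3
  have hgoal : g 0 = 0 ∧ g 1 = 0 ∧ g 2 = 0 := by
    match o₁, o₂, o₃ with
    | none, none, _ => exact absurd rfl h12
    | _, none, none => exact absurd rfl h23
    | none, _, none => exact absurd rfl h13
    | none, some t, some r =>
      have htr : t ≠ r := fun h => h23 (by rw [h])
      simp only [vct, Matrix.cons_val_zero, Matrix.cons_val_one, Matrix.head_cons,
        Matrix.cons_val_two, Matrix.tail_cons, Matrix.cons_val_three] at h0 h1 h2 h3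
      have e1 : g 1 * (t - r) = 0 := by linear_combination h1 - r * h0
      have hg1 : g 1 = 0 := by
        rcases mul_eq_zero.mp e1 with h | h
        · exact h
        · exact absurd (sub_eq_zero.mp h) htr
      have hg2 : g 2 = 0 := by
        rw [hg1] at h0; linear_combination h0
      have hg0 : g 0 = 0 := by
        rw [hg1, hg2] at h3; linear_combination h3
      exact ⟨hg0, hg1, hg2⟩
    | some t, none, some r =>
      have htr : t ≠ r := fun h => h13 (by rw [h])
      simp only [vct, Matrix.cons_val_zero, Matrix.cons_val_one, Matrix.head_cons,
        Matrix.cons_val_two, Matrix.tail_cons, Matrix.cons_val_three] at h0 h1 h2 h3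
      have e1 : g 0 * (t - r) = 0 := by linear_combination h1 - r * h0
      have hg0 : g 0 = 0 := by
        rcases mul_eq_zero.mp e1 with h | h
        · exact h
        · exact absurd (sub_eq_zero.mp h) htr
      have hg2 : g 2 = 0 := by
        rw [hg0] at h0; linear_combination h0
      have hg1 : g 1 = 0 := by
        rw [hg0, hg2] at h3; linear_combination h3
      exact ⟨hg0, hg1, hg2⟩
    | some t, some r, none =>
      have htr : t ≠ r := fun h => h12 (by rw [h])
      simp only [vct, Matrix.cons_val_zero, Matrix.cons_val_one, Matrix.head_cons,
        Matrix.cons_val_two, Matrix.tail_cons, Matrix.cons_val_three] at h0 h1 h2 h3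
      have e1 : g 0 * (t - r) = 0 := by linear_combination h1 - r * h0
      have hg0 : g 0 = 0 := by
        rcases mul_eq_zero.mp e1 with h | h
        · exact h
        · exact absurd (sub_eq_zero.mp h) htr
      have hg1 : g 1 = 0 := by
        rw [hg0] at h0; linear_combination h0
      have hg2 : g 2 = 0 := by
        rw [hg0, hg1] at h3; linear_combination h3
      exact ⟨hg0, hg1, hg2⟩
    | some s, some t, some r =>
      have hst : s ≠ t := fun h => h12 (by rw [h])
      have hsr : s ≠ r := fun h => h13 (by rw [h])
      have htr : t ≠ r := fun h => h23 (by rw [h])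
      simp only [vct, Matrix.cons_val_zero, Matrix.cons_val_one, Matrix.head_cons,
        Matrix.cons_val_two, Matrix.tail_cons, Matrix.cons_val_three] at h0 h1 h2 h3
      have e0 : g 0 * ((s - t) * (s - r)) = 0 := by
        linear_combination h2 - (t + r) * h1 + (t * r) * h0
      have e1 : g 1 * ((t - s) * (t - r)) = 0 := by
        linear_combination h2 - (s + r) * h1 + (s * r) * h0
      have e2 : g 2 * ((r - s) * (r - t)) = 0 := by
        linear_combination h2 - (s + t) * h1 + (s * t) * h0
      refine ⟨?_, ?_, ?_⟩
      · rcases mul_eq_zero.mp e0 with h | h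
        · exact h
        · rcases mul_eq_zero.mp h with h' | h'
          · exact absurd (sub_eq_zero.mp h') hst
          · exact absurd (sub_eq_zero.mp h') hsr
      · rcases mul_eq_zero.mp e1 with h | h
        · exact h
        · rcases mul_eq_zero.mp h with h' | h'
          · exact absurd (sub_eq_zero.mp h') hst.symm
          · exact absurd (sub_eq_zero.mp h') htr
      · rcases mul_eq_zero.mp e2 with h | h
        · exact h
        · rcases mul_eq_zero.mp h with h' | h'
          · exact absurd (sub_eq_zero.mp h') hsr.symm
          · exact absurd (sub_eq_zero.mp h') htr.symm
  intro i
  fin_cases i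
  · exact hgoal.1
  · exact hgoal.2.1
  · exact hgoal.2.2

variable (f : (Fin 4 → F) →ₗ[F] V)

/-- the twisted cubic point set determined by `f` -/
def tcset : Set (ℙ F V) :=
  {p | ∃ a b : F, (a ≠ 0 ∨ b ≠ 0) ∧
    p.submodule = Submodule.span F {f ![a ^ 3, a ^ 2 * b, a * b ^ 2, b ^ 3]}}

variable {f}

lemma fvct_ne_zero (hf : Function.Injective f) (o : Option F) : f (vct o) ≠ 0 := by
  intro h
  exact vct_ne_zero o ((LinearMap.map_eq_zero_iff f hf).mp h)

lemma tc_point (hf : Function.Injective f) {p : ℙ F V} (hp : p ∈ tcset f) :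
    ∃ o : Option F, p = Projectivization.mk F (f (vct o)) (fvct_ne_zero hf o) := by
  obtain ⟨a, b, hab, hsub⟩ := hp
  obtain ⟨o, c, hc, hvec⟩ := tc_norm hab
  refine ⟨o, Projectivization.submodule_injective ?_⟩
  rw [hsub, Projectivization.submodule_mk, hvec, map_smul]
  exact Submodule.span_singleton_smul_eq (IsUnit.mk0 c hc) _

lemma tc_no_three_collinear [FiniteDimensional F V] (hf : Function.Injective f)
    {W : Submodule F V} (hW : finrank F W = 2) {p₁ p₂ p₃ : ℙ F V}
    (h1 : p₁ ∈ tcset f) (h2 : p₂ ∈ tcset f) (h3 : p₃ ∈ tcset f)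
    (h12 : p₁ ≠ p₂) (h13 : p₁ ≠ p₃) (h23 : p₂ ≠ p₃)
    (hw1 : p₁ ∈ pts W) (hw2 : p₂ ∈ pts W) (hw3 : p₃ ∈ pts W) : False := by
  obtain ⟨o₁, rfl⟩ := tc_point hf h1
  obtain ⟨o₂, rfl⟩ := tc_point hf h2
  obtain ⟨o₃, rfl⟩ := tc_point hf h3
  have ho12 : o₁ ≠ o₂ := fun h => h12 (by rw [h])
  have ho13 : o₁ ≠ o₃ := fun h => h13 (by rw [h])
  have ho23 : o₂ ≠ o₃ := fun h => h23 (by rw [h])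
  have hli : LinearIndependent F ![f (vct o₁), f (vct o₂), f (vct o₃)] := by
    have := (vand3 ho12 ho13 ho23).map' f (LinearMap.ker_eq_bot.mpr hf)
    have heq : (f ∘ ![vct o₁, vct o₂, vct o₃]) = ![f (vct o₁), f (vct o₂), f (vct o₃)] := by
      funext i; fin_cases i <;> simp
    rwa [heq] at this
  have hsub : Submodule.span F (Set.range ![f (vct o₁), f (vct o₂), f (vct o₃)]) ≤ W := by
    rw [Submodule.span_le]
    rintro x ⟨i, rfl⟩
    have hmem : ∀ (o : Option F), Projectivization.mk F (f (vct o)) (fvct_ne_zero hf o) ∈ pts W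
        → f (vct o) ∈ W := by
      intro o h
      have : (Projectivization.mk F (f (vct o)) (fvct_ne_zero hf o)).submodule ≤ W := h
      rwa [Projectivization.submodule_mk, Submodule.span_singleton_le_iff_mem] at this
    fin_cases i
    · exact hmem o₁ hw1
    · exact hmem o₂ hw2
    · exact hmem o₃ hw3
  have hrk : finrank F (Submodule.span F (Set.range ![f (vct o₁), f (vct o₂), f (vct o₃)])) = 3 := by
    rw [finrank_span_eq_card hli, Fintype.card_fin]
  have := Submodule.finrank_mono hsub
  rw [hrk, hW] at this
  omega

lemma tc_ncard_le [Fintype F] [Finite (ℙ F V)] (hf : Function.Injective f) :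
    (tcset f).ncard ≤ Fintype.card F + 1 := by
  have hsub : tcset f ⊆ Set.range (fun o : Option F =>
      Projectivization.mk F (f (vct o)) (fvct_ne_zero hf o)) := by
    intro p hp
    obtain ⟨o, rfl⟩ := tc_point hf hp
    exact ⟨o, rfl⟩
  calc (tcset f).ncard ≤ (Set.range (fun o : Option F =>
      Projectivization.mk F (f (vct o)) (fvct_ne_zero hf o))).ncard :=
        Set.ncard_le_ncard hsub (Set.toFinite _)
    _ ≤ (Set.univ : Set (Option F)).ncard := by
        rw [← Set.image_univ]; exact Set.ncard_image_le (Set.toFinite _)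
    _ = Fintype.card F + 1 := by
        rw [Set.ncard_univ, Nat.card_eq_fintype_card, Fintype.card_option]



end tc

end PGaux

-- ===================== master layer =====================
namespace PGaux
section master
variable {F : Type} [Field F] [Fintype F]

/-- The lines contained in `K`. -/
def Lset (K : Set (PGPt F 4)) : Set (Set (PGPt F 4)) := {S | IsLine F 4 S ∧ S ⊆ K}

/-- The lines of `K` through a point. -/
def NL (K : Set (PGPt F 4)) (p : PGPt F 4) : Set (Set (PGPt F 4)) :=
  {S | S ∈ Lset K ∧ p ∈ S}

/-- The union of all lines of `K` through `p`. -/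
def cone (K : Set (PGPt F 4)) (p : PGPt F 4) : Set (PGPt F 4) := ⋃₀ NL K p

/-- every 4-dim solid section of `K` is a union of (at most three) lines of `K`,
or a twisted cubic. -/
def GoodSolids (K : Set (PGPt F 4)) : Prop :=
  ∀ W : Submodule F (Fin (4+1) → F), finrank F W = 4 →
    (∃ S1 S2 S3, S1 ∈ Lset K ∧ S2 ∈ Lset K ∧ S3 ∈ Lset K ∧ K ∩ pts W = S1 ∪ S2 ∪ S3) ∨
    (∃ f : (Fin 4 → F) →ₗ[F] (Fin (4+1) → F), Function.Injective f ∧ K ∩ pts W = tcset f)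

variable {q : ℕ} {K : Set (PGPt F 4)}

lemma lset_spec {S : Set (PGPt F 4)} (h : S ∈ Lset K) :
    ∃ W : Submodule F (Fin (4+1) → F), finrank F W = 2 ∧ S = pts W ∧ pts W ⊆ K := by
  obtain ⟨⟨W, h2, rfl⟩, hsub⟩ := h
  exact ⟨W, h2, rfl, hsub⟩

lemma lset_sub_K {S : Set (PGPt F 4)} (h : S ∈ Lset K) : S ⊆ K := h.2

lemma hdim5 : finrank F (Fin (4+1) → F) = 5 := by
  rw [Module.finrank_fin_fun]

lemma line_ncard (hq : Fintype.card F = q) {S : Set (PGPt F 4)} (hS : S ∈ Lset K) :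
    S.ncard = q + 1 := by
  obtain ⟨W, h2, rfl, -⟩ := lset_spec hS
  rw [ncard_pts_line h2, hq]

lemma line_two_pts {S T : Set (PGPt F 4)} (hS : S ∈ Lset K) (hT : T ∈ Lset K)
    {x y : PGPt F 4} (hxy : x ≠ y) (hxS : x ∈ S) (hyS : y ∈ S) (hxT : x ∈ T) (hyT : y ∈ T) :
    S = T := by
  obtain ⟨W1, h1, rfl, -⟩ := lset_spec hS
  obtain ⟨W2, h2, rfl, -⟩ := lset_spec hT
  rw [line_eq_sup h1 hxy hxS hyS, line_eq_sup h2 hxy hxT hyT]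

lemma line_inter_sub {S T : Set (PGPt F 4)} (hS : S ∈ Lset K) (hT : T ∈ Lset K)
    (hne : S ≠ T) {x y : PGPt F 4} (hx : x ∈ S ∩ T) (hy : y ∈ S ∩ T) : x = y := by
  by_contra hxy
  exact hne (line_two_pts hS hT hxy hx.1 hy.1 hx.2 hy.2)

lemma line_inter_ncard_le {S T : Set (PGPt F 4)} (hS : S ∈ Lset K) (hT : T ∈ Lset K)
    (hne : S ≠ T) : (S ∩ T).ncard ≤ 1 := by
  by_contra h
  obtain ⟨x, hx, y, hy, hxy⟩ := exists_two_distinct (S := S ∩ T) (by omega)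
  exact hxy (line_inter_sub hS hT hne hx hy)

lemma line_in_union3 (hq : Fintype.card F = q) (h3 : 3 ≤ q)
    {S S1 S2 S3 : Set (PGPt F 4)} (hS : S ∈ Lset K) (h1 : S1 ∈ Lset K) (h2 : S2 ∈ Lset K)
    (h3' : S3 ∈ Lset K) (hsub : S ⊆ S1 ∪ S2 ∪ S3) : S = S1 ∨ S = S2 ∨ S = S3 := by
  by_contra hc
  push_neg at hc
  obtain ⟨hne1, hne2, hne3⟩ := hc
  have hcover : S = (S ∩ S1) ∪ (S ∩ S2) ∪ (S ∩ S3) := by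
    ext x
    constructor
    · intro hx
      rcases hsub hx with (h | h) | h
      · exact Or.inl (Or.inl ⟨hx, h⟩)
      · exact Or.inl (Or.inr ⟨hx, h⟩)
      · exact Or.inr ⟨hx, h⟩
    · rintro ((⟨h, -⟩ | ⟨h, -⟩) | ⟨h, -⟩) <;> exact h
  have hb : S.ncard ≤ 3 := by
    rw [hcover]
    have := Set.ncard_union_le ((S ∩ S1) ∪ (S ∩ S2)) (S ∩ S3)
    have := Set.ncard_union_le (S ∩ S1) (S ∩ S2)
    have i1 := line_inter_ncard_le hS h1 hne1
    have i2 := line_inter_ncard_le hS h2 hne2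
    have i3 := line_inter_ncard_le hS h3' hne3
    omega
  rw [line_ncard hq hS] at hb
  omega

lemma two_lines_ncard (hq : Fintype.card F = q) {S T : Set (PGPt F 4)}
    (hS : S ∈ Lset K) (hT : T ∈ Lset K) (hne : S ≠ T) : 2*q + 1 ≤ (S ∪ T).ncard := by
  have hdiffeq : T \ S = T \ (S ∩ T) := by
    ext x; simp only [Set.mem_diff, Set.mem_inter_iff]; tauto
  have hd : (T \ S).ncard = T.ncard - (S ∩ T).ncard := by
    rw [hdiffeq, Set.ncard_diff Set.inter_subset_right (Set.toFinite _)]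
  have hu : S ∪ T = S ∪ (T \ S) := by rw [Set.union_diff_self]
  rw [hu, Set.ncard_union_eq Set.disjoint_sdiff_right (Set.toFinite _) (Set.toFinite _)]
  have h1 := line_ncard hq hS
  have h2 := line_ncard hq hT
  have h3 := line_inter_ncard_le hS hT hne
  omega

lemma NL_inter {p : PGPt F 4} {S T : Set (PGPt F 4)} (hS : S ∈ NL K p) (hT : T ∈ NL K p)
    (hne : S ≠ T) : S ∩ T = {p} := by
  apply Set.eq_singleton_iff_unique_mem.mpr
  refine ⟨⟨hS.2, hT.2⟩, fun x hx => ?_⟩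
  exact line_inter_sub hS.1 hT.1 hne hx ⟨hS.2, hT.2⟩

lemma cone_sub : cone K p ⊆ K := by
  rintro x ⟨S, hS, hxS⟩
  exact hS.1.2 hxS

lemma cone_ncard (hq : Fintype.card F = q) {p : PGPt F 4} (hne : (NL K p).Nonempty) :
    (cone K p).ncard = 1 + (NL K p).ncard * q := by
  classical
  have hfin : (NL K p).Finite := Set.toFinite _
  have hT := ncard_sUnion_cone (k := q) hfin.toFinset
    (by rwa [Set.Finite.toFinset_nonempty]) p
    (fun ℓ hl => by
      rw [Set.Finite.mem_toFinset] at hl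
      exact line_ncard hq hl.1)
    (fun ℓ hl => by
      rw [Set.Finite.mem_toFinset] at hl
      exact hl.2)
    (fun ℓ hl m hm hlm => by
      rw [Set.Finite.mem_toFinset] at hl hm
      exact NL_inter hl hm hlm)
  rw [Set.Finite.coe_toFinset] at hT
  rw [cone, hT, Set.ncard_eq_toFinset_card _ hfin]

lemma point_in_cone {p : PGPt F 4} (hne : (NL K p).Nonempty) : p ∈ cone K p := by
  obtain ⟨S, hS⟩ := hne
  exact ⟨S, hS, hS.2⟩

end master
end PGaux
namespace PGaux
section master2
variable {F : Type} [Field F] [Fintype F]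
variable {q : ℕ} {K : Set (PGPt F 4)}

lemma pencil5 {Wp : Submodule F (Fin (4+1) → F)} (hp3 : finrank F Wp = 3) :
    ∃ sol : Option F → Submodule F (Fin (4+1) → F),
      (∀ o, Wp ≤ sol o ∧ finrank F (sol o) = 4) ∧
      (∀ o o', o ≠ o' → sol o ⊓ sol o' = Wp) ∧
      (∀ p : PGPt F 4, ∃ o, p ∈ pts (sol o)) := by
  obtain ⟨sol, h1, h2, h3⟩ := pencil (Wp := Wp) (by rw [hdim5, hp3])
  refine ⟨sol, fun o => ⟨(h1 o).1, by rw [(h1 o).2, hp3]⟩, h2, fun p => ?_⟩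
  obtain ⟨o, ho⟩ := h3 p.rep
  exact ⟨o, rep_mem_iff.mp ho⟩

lemma good_solid_line (hG : GoodSolids K) (hq : Fintype.card F = q) (h3 : 3 ≤ q)
    {W : Submodule F (Fin (4+1) → F)} (hW : finrank F W = 4)
    {S : Set (PGPt F 4)} (hS : S ∈ Lset K) (hsub : S ⊆ pts W) :
    ∃ S1 S2 S3, (S1 ∈ Lset K ∧ S1 ⊆ pts W) ∧ (S2 ∈ Lset K ∧ S2 ⊆ pts W) ∧
      (S3 ∈ Lset K ∧ S3 ⊆ pts W) ∧ K ∩ pts W = S1 ∪ S2 ∪ S3 := by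
  rcases hG W hW with ⟨S1, S2, S3, h1, h2, h3', heq⟩ | ⟨f, hf, heq⟩
  · have hs1 : S1 ⊆ pts W := by
      intro x hx
      have : x ∈ K ∩ pts W := by rw [heq]; exact Or.inl (Or.inl hx)
      exact this.2
    have hs2 : S2 ⊆ pts W := by
      intro x hx
      have : x ∈ K ∩ pts W := by rw [heq]; exact Or.inl (Or.inr hx)
      exact this.2
    have hs3 : S3 ⊆ pts W := by
      intro x hx
      have : x ∈ K ∩ pts W := by rw [heq]; exact Or.inr hx
      exact this.2
    exact ⟨S1, S2, S3, ⟨h1, hs1⟩, ⟨h2, hs2⟩, ⟨h3', hs3⟩, heq⟩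
  · exfalso
    have hStc : S ⊆ tcset f := by
      rw [← heq]
      exact fun x hx => ⟨lset_sub_K hS hx, hsub hx⟩
    have hcard : 3 ≤ S.ncard := by rw [line_ncard hq hS]; omega
    obtain ⟨x, hx, y, hy, z, hz, hxy, hxz, hyz⟩ := exists_three_distinct hcard
    obtain ⟨WS, hWS2, hSeq, -⟩ := lset_spec hS
    rw [hSeq] at hx hy hz
    exact tc_no_three_collinear hf hWS2 (hStc (hSeq ▸ hx)) (hStc (hSeq ▸ hy))
      (hStc (hSeq ▸ hz)) hxy hxz hyz hx hy hz

lemma exists_line (hG : GoodSolids K) (hq : Fintype.card F = q) (h3 : 3 ≤ q)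
    (hK : K.ncard = q^2 + 2*q + 1) : ∃ S, S ∈ Lset K := by
  by_contra hno
  push_neg at hno
  have htc : ∀ W : Submodule F (Fin (4+1) → F), finrank F W = 4 →
      (K ∩ pts W).ncard ≤ q + 1 := by
    intro W hW
    rcases hG W hW with ⟨S1, S2, S3, h1, -⟩ | ⟨f, hf, heq⟩
    · exact absurd h1 (hno S1)
    · rw [heq, ← hq]
      exact tc_ncard_le hf
  have hq2 : q^2 = q*q := sq q
  have hK2 : 2 ≤ K.ncard := by rw [hK]; omega
  obtain ⟨p1, hp1, p2, hp2, hp12⟩ := exists_two_distinct hK2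
  have hW2 : finrank F ((p1.submodule ⊔ p2.submodule : Submodule F (Fin (4+1) → F))) = 2 :=
    finrank_sup_two hp12
  obtain ⟨Wπ, hWle, hWπ3⟩ := exists_supmodule (k := 3) (le_of_eq_of_le hW2 (by omega))
    (le_of_le_of_eq (by omega) hdim5.symm)
  obtain ⟨sol, hsol1, hsol2, hsol3⟩ := pencil5 hWπ3
  set y := (K ∩ pts Wπ).ncard with hy
  have hy2 : 2 ≤ y := by
    have hsub : ({p1, p2} : Set (PGPt F 4)) ⊆ K ∩ pts Wπ := by
      rintro x (rfl | rfl)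
      · exact ⟨hp1, le_trans le_sup_left hWle⟩
      · exact ⟨hp2, le_trans le_sup_right hWle⟩
    calc 2 = ({p1, p2} : Set (PGPt F 4)).ncard := (Set.ncard_pair hp12).symm
      _ ≤ y := Set.ncard_le_ncard hsub (Set.toFinite _)
  have hyle : y ≤ q + 1 := by
    have hsub : K ∩ pts Wπ ⊆ K ∩ pts (sol none) :=
      Set.inter_subset_inter_right _ (pts_mono (hsol1 none).1)
    exact le_trans (Set.ncard_le_ncard hsub (Set.toFinite _)) (htc _ (hsol1 none).2)
  have hcover : K ⊆ (K ∩ pts Wπ) ∪ ⋃ o ∈ (Finset.univ : Finset (Option F)),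
      ((K ∩ pts (sol o)) \ pts Wπ) := by
    intro p hp
    obtain ⟨o, ho⟩ := hsol3 p
    by_cases hπ : p ∈ pts Wπ
    · exact Or.inl ⟨hp, hπ⟩
    · exact Or.inr (Set.mem_biUnion (Finset.mem_univ o) ⟨⟨hp, ho⟩, hπ⟩)
  have hsummand : ∀ o : Option F, ((K ∩ pts (sol o)) \ pts Wπ).ncard ≤ (q+1) - y := by
    intro o
    have hdeq : (K ∩ pts (sol o)) \ pts Wπ = (K ∩ pts (sol o)) \ (K ∩ pts Wπ) := by
      ext x
      simp only [Set.mem_diff, Set.mem_inter_iff]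
      tauto
    have hsub : K ∩ pts Wπ ⊆ K ∩ pts (sol o) :=
      Set.inter_subset_inter_right _ (pts_mono (hsol1 o).1)
    rw [hdeq, Set.ncard_diff hsub (Set.toFinite _)]
    have := htc _ (hsol1 o).2
    omega
  have hbound : K.ncard ≤ y + (q+1) * ((q+1) - y) := by
    calc K.ncard ≤ ((K ∩ pts Wπ) ∪ ⋃ o ∈ (Finset.univ : Finset (Option F)),
        ((K ∩ pts (sol o)) \ pts Wπ)).ncard := Set.ncard_le_ncard hcover (Set.toFinite _)
      _ ≤ y + (⋃ o ∈ (Finset.univ : Finset (Option F)),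
          ((K ∩ pts (sol o)) \ pts Wπ)).ncard := Set.ncard_union_le _ _
      _ ≤ y + ∑ o ∈ (Finset.univ : Finset (Option F)),
          ((K ∩ pts (sol o)) \ pts Wπ).ncard := by
            exact Nat.add_le_add_left (ncard_biUnion_le _ _) y
      _ ≤ y + ∑ _o ∈ (Finset.univ : Finset (Option F)), ((q+1) - y) := by
            exact Nat.add_le_add_left (Finset.sum_le_sum (fun o _ => hsummand o)) y
      _ = y + (q+1) * ((q+1) - y) := by
            rw [Finset.sum_const, Finset.card_univ, Fintype.card_option, hq, smul_eq_mul]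
  have hmulid : (q+1) * ((q+1) - y) + (q+1) * y = (q+1) * (q+1) := by
    rw [← Nat.mul_add, Nat.sub_add_cancel hyle]
  have hmul2 : (q+1) * (q+1) = q*q + 2*q + 1 := by ring
  have hmul3 : (q+1) * 2 ≤ (q+1) * y := Nat.mul_le_mul_left (q+1) hy2
  rw [hK] at hbound
  omega

lemma cover_lemma (hG : GoodSolids K) (hq : Fintype.card F = q) (h3 : 3 ≤ q)
    (hK : K.ncard = q^2 + 2*q + 1) : ∀ p ∈ K, ∃ S ∈ Lset K, p ∈ S := by
  obtain ⟨ℓ, hℓ⟩ := exists_line hG hq h3 hK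
  intro p hp
  by_cases hps : p ∈ ℓ
  · exact ⟨ℓ, hℓ, hps⟩
  obtain ⟨W0, hW02, rfl, -⟩ := lset_spec hℓ
  have hpn : p ∉ pts W0 := hps
  have hπ3 : finrank F ((W0 ⊔ p.submodule : Submodule F (Fin (4+1) → F))) = 3 := by
    rw [finrank_sup_point hpn, hW02]
  obtain ⟨W4, hW4le, hW44⟩ := exists_supmodule (k := 4) (le_of_eq_of_le hπ3 (by omega))
    (le_of_le_of_eq (by omega) hdim5.symm)
  obtain ⟨S1, S2, S3, h1, h2, h3', heq⟩ := good_solid_line hG hq h3 hW44 hℓ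
    (pts_mono (le_trans le_sup_left hW4le))
  have hpmem : p ∈ K ∩ pts W4 := ⟨hp, le_trans (le_trans le_sup_right hW4le) (le_refl _)⟩
  rw [heq] at hpmem
  rcases hpmem with (h | h) | h
  · exact ⟨S1, h1.1, h⟩
  · exact ⟨S2, h2.1, h⟩
  · exact ⟨S3, h3'.1, h⟩

end master2
end PGaux
namespace PGaux
section master3
variable {F : Type} [Field F] [Fintype F]
variable {q : ℕ} {K : Set (PGPt F 4)}

lemma no3cop (hG : GoodSolids K) (hq : Fintype.card F = q) (h3 : 3 ≤ q)
    (hK : K.ncard = q^2 + 2*q + 1) {Wπ : Submodule F (Fin (4+1) → F)}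
    (hπ3 : finrank F Wπ = 3) {S1 S2 S3 : Set (PGPt F 4)}
    (h1 : S1 ∈ Lset K) (h2 : S2 ∈ Lset K) (h3' : S3 ∈ Lset K)
    (h12 : S1 ≠ S2) (h13 : S1 ≠ S3) (h23 : S2 ≠ S3)
    (hb1 : S1 ⊆ pts Wπ) (hb2 : S2 ⊆ pts Wπ) (hb3 : S3 ⊆ pts Wπ) : False := by
  classical
  obtain ⟨sol, hsol1, hsol2, hsol3⟩ := pencil5 hπ3
  have hsec : ∀ o : Option F, K ∩ pts (sol o) = S1 ∪ S2 ∪ S3 := by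
    intro o
    obtain ⟨T1, T2, T3, hT1, hT2, hT3, heq⟩ := good_solid_line hG hq h3 (hsol1 o).2 h1
      (le_trans hb1 (pts_mono (hsol1 o).1))
    have hmem : ∀ S, S ∈ Lset K → S ⊆ pts Wπ → S = T1 ∨ S = T2 ∨ S = T3 := by
      intro S hS hbS
      apply line_in_union3 hq h3 hS hT1.1 hT2.1 hT3.1
      rw [← heq]
      exact fun x hx => ⟨lset_sub_K hS hx, le_trans hbS (pts_mono (hsol1 o).1) hx⟩
    set A : Finset (Set (PGPt F 4)) := {S1, S2, S3} with hA
    set B : Finset (Set (PGPt F 4)) := {T1, T2, T3} with hB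
    have hcardA : 3 ≤ A.card := by
      rw [hA]
      rw [Finset.card_insert_of_notMem (by simp [h12, h13]),
        Finset.card_insert_of_notMem (by simp [h23]), Finset.card_singleton]
    have hcardB : B.card ≤ 3 := by
      rw [hB]
      refine le_trans (Finset.card_insert_le _ _) ?_
      have := Finset.card_insert_le T2 ({T3} : Finset (Set (PGPt F 4)))
      simp only [Finset.card_singleton] at this ⊢
      omega
    have hsubAB : A ⊆ B := by
      intro x hx
      rw [hA] at hx
      simp only [Finset.mem_insert, Finset.mem_singleton] at hx
      have hxl : x ∈ Lset K ∧ x ⊆ pts Wπ := by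
        rcases hx with rfl | rfl | rfl
        exacts [⟨h1, hb1⟩, ⟨h2, hb2⟩, ⟨h3', hb3⟩]
      rcases hmem x hxl.1 hxl.2 with rfl | rfl | rfl <;> simp [hB]
    have hAB : A = B := Finset.eq_of_subset_of_card_le hsubAB (by omega)
    have hU : ∀ (X Y Z : Set (PGPt F 4)),
        ⋃₀ (({X, Y, Z} : Finset (Set (PGPt F 4))) : Set (Set (PGPt F 4))) = X ∪ Y ∪ Z := by
      intro X Y Z
      simp only [Finset.coe_insert, Finset.coe_singleton, Set.sUnion_insert,
        Set.sUnion_singleton]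
      rw [Set.union_assoc]
    calc K ∩ pts (sol o) = T1 ∪ T2 ∪ T3 := heq
      _ = ⋃₀ (B : Set (Set (PGPt F 4))) := (hU T1 T2 T3).symm
      _ = ⋃₀ (A : Set (Set (PGPt F 4))) := by rw [hAB]
      _ = S1 ∪ S2 ∪ S3 := hU S1 S2 S3
  have hKsub : K ⊆ S1 ∪ S2 ∪ S3 := by
    intro p hp
    obtain ⟨o, ho⟩ := hsol3 p
    rw [← hsec o]
    exact ⟨hp, ho⟩
  have hb : K.ncard ≤ 3*q + 3 := by
    have hc := Set.ncard_le_ncard hKsub (Set.toFinite _)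
    have hu1 := Set.ncard_union_le (S1 ∪ S2) S3
    have hu2 := Set.ncard_union_le S1 S2
    have e1 := line_ncard hq h1
    have e2 := line_ncard hq h2
    have e3 := line_ncard hq h3'
    omega
  have hq2 : q^2 = q*q := sq q
  have hmul : 3*q ≤ q*q := Nat.mul_le_mul_right q h3
  omega

lemma F4 (hG : GoodSolids K) (hq : Fintype.card F = q) (h3 : 3 ≤ q)
    {S : Set (PGPt F 4)} (hS : S ∈ Lset K) {p : PGPt F 4} (hp : p ∈ K) (hpS : p ∉ S) :
    (∃ n ∈ NL K p, ∃ Wπ : Submodule F (Fin (4+1) → F), finrank F Wπ = 3 ∧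
      S ⊆ pts Wπ ∧ p.submodule ≤ Wπ ∧ n ⊆ pts Wπ) ∨ q + 1 ≤ (NL K p).ncard := by
  classical
  obtain ⟨W0, hW02, hSeq, -⟩ := lset_spec hS
  have hpn : p ∉ pts W0 := by rw [← hSeq]; exact hpS
  set Wπ := (W0 ⊔ p.submodule : Submodule F (Fin (4+1) → F)) with hWπ
  have hπ3 : finrank F Wπ = 3 := by
    rw [hWπ, finrank_sup_point hpn, hW02]
  by_cases hex : ∃ n ∈ NL K p, n ⊆ pts Wπ
  · obtain ⟨n, hn, hnsub⟩ := hex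
    exact Or.inl ⟨n, hn, Wπ, hπ3, by rw [hSeq]; exact pts_mono le_sup_left, le_sup_right, hnsub⟩
  · right
    obtain ⟨sol, hsol1, hsol2, hsol3⟩ := pencil5 hπ3
    have hchoice : ∀ o : Option F, ∃ n, n ∈ NL K p ∧ n ⊆ pts (sol o) := by
      intro o
      obtain ⟨T1, T2, T3, hT1, hT2, hT3, heq⟩ := good_solid_line hG hq h3 (hsol1 o).2 hS
        (by rw [hSeq]; exact pts_mono (le_trans le_sup_left (hsol1 o).1))
      have hpmem : p ∈ K ∩ pts (sol o) := ⟨hp, le_trans le_sup_right (hsol1 o).1⟩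
      rw [heq] at hpmem
      rcases hpmem with (h | h) | h
      · exact ⟨T1, ⟨hT1.1, h⟩, hT1.2⟩
      · exact ⟨T2, ⟨hT2.1, h⟩, hT2.2⟩
      · exact ⟨T3, ⟨hT3.1, h⟩, hT3.2⟩
    choose g hg1 hg2 using hchoice
    have hginj : Function.Injective g := by
      intro o o' hgoo
      by_contra hne
      refine hex ⟨g o, hg1 o, ?_⟩
      have hsub : g o ⊆ pts (sol o) ∩ pts (sol o') := by
        intro x hx
        exact ⟨hg2 o hx, by rw [hgoo] at hx; exact hg2 o' hx⟩
      rw [← pts_inter, hsol2 o o' hne] at hsub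
      exact hsub
    have hcard := card_le_ncard_of_inj hginj (fun o => hg1 o)
    rwa [Fintype.card_option, hq] at hcard

end master3
end PGaux
namespace PGaux
section master4
variable {F : Type} [Field F] [Fintype F]
variable {q : ℕ} {K : Set (PGPt F 4)}

lemma vertex_le (hq : Fintype.card F = q) (h3 : 3 ≤ q) (hK : K.ncard = q^2 + 2*q + 1)
    {p : PGPt F 4} (hp : q + 1 ≤ (NL K p).ncard) : (NL K p).ncard ≤ q + 2 := by
  have hne : (NL K p).Nonempty := Set.nonempty_of_ncard_ne_zero (by omega)
  have hc := cone_ncard hq hne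
  have hle : (cone K p).ncard ≤ K.ncard := Set.ncard_le_ncard cone_sub (Set.toFinite _)
  rw [hc, hK] at hle
  have hq2 : q^2 = q*q := sq q
  by_contra hgt
  push_neg at hgt
  have : (q+3) * q ≤ (NL K p).ncard * q := Nat.mul_le_mul_right q hgt
  have hexp : (q+3)*q = q*q + 3*q := by ring
  omega

lemma not_vertex_q2 (hG : GoodSolids K) (hq : Fintype.card F = q) (h3 : 3 ≤ q)
    (hK : K.ncard = q^2 + 2*q + 1) {p : PGPt F 4} (hr : (NL K p).ncard = q + 2) : False := by
  classical
  have hq2 : q^2 = q*q := sq q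
  have hne : (NL K p).Nonempty := Set.nonempty_of_ncard_ne_zero (by omega)
  -- the cone is all of K
  have hconeK : cone K p = K := by
    apply Set.eq_of_subset_of_ncard_le cone_sub _ (Set.toFinite _)
    rw [cone_ncard hq hne, hr, hK]
    have : (q+2)*q = q*q + 2*q := by ring
    omega
  -- a solid avoiding p
  obtain ⟨U, hU⟩ := Submodule.exists_isCompl (p.submodule : Submodule F (Fin (4+1) → F))
  have hrkU : finrank F U = 4 := by
    have h5 := Submodule.finrank_add_eq_of_isCompl hU
    rw [hdim5, p.finrank_submodule] at h5
    omega
  have hpU : p ∉ pts U := by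
    intro hin
    have hle : p.submodule ≤ p.submodule ⊓ U := le_inf le_rfl hin
    rw [disjoint_iff.mp hU.disjoint] at hle
    have := Submodule.finrank_mono hle
    rw [p.finrank_submodule] at this
    simp [finrank_bot] at this
  -- each line through p meets pts U in exactly one point
  have hsingle : ∀ S : Set (PGPt F 4), S ∈ NL K p → ∃ x, S ∩ pts U = {x} := by
    intro S hS
    obtain ⟨WS, hWS2, hSeq, -⟩ := lset_spec hS.1
    have hWSnotle : ¬ WS ≤ U := by
      intro hle
      have hpWS : p ∈ pts WS := hSeq ▸ hS.2
      exact hpU (le_trans hpWS hle)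
    have hsup5 : finrank F ((WS ⊔ U : Submodule F (Fin (4+1) → F))) = 5 := by
      have hlt : U < WS ⊔ U := by
        rcases lt_or_eq_of_le (le_sup_right : U ≤ WS ⊔ U) with h | h
        · exact h
        · exact absurd (sup_le_iff.mp h.symm.le).1 hWSnotle
      have h1 : finrank F U < finrank F ((WS ⊔ U : Submodule F (Fin (4+1) → F))) :=
        Submodule.finrank_lt_finrank_of_lt hlt
      have h2 : finrank F ((WS ⊔ U : Submodule F (Fin (4+1) → F))) ≤ 5 := by
        have := Submodule.finrank_le (WS ⊔ U : Submodule F (Fin (4+1) → F))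
        rwa [hdim5] at this
      omega
    have hinf1 : finrank F ((WS ⊓ U : Submodule F (Fin (4+1) → F))) = 1 := by
      have := Submodule.finrank_sup_add_finrank_inf_eq WS U
      rw [hWS2, hrkU, hsup5] at this
      omega
    refine ⟨Projectivization.mk'' _ hinf1, ?_⟩
    rw [hSeq, ← pts_inter]
    exact pts_rank_one hinf1
  have hchoice : ∀ S : Set (PGPt F 4), ∃ x : PGPt F 4, S ∈ NL K p → S ∩ pts U = {x} := by
    intro S
    by_cases h : S ∈ NL K p
    · obtain ⟨x, hx⟩ := hsingle S h
      exact ⟨x, fun _ => hx⟩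
    · exact ⟨p, fun h' => absurd h' h⟩
  choose g hg using hchoice
  have hgmem : ∀ S, S ∈ NL K p → g S ∈ S ∩ pts U := by
    intro S hS
    rw [hg S hS]
    rfl
  have hEeq : K ∩ pts U = g '' (NL K p) := by
    ext x
    constructor
    · rintro ⟨hxK, hxU⟩
      have : x ∈ cone K p := hconeK.symm ▸ hxK
      obtain ⟨S, hS, hxS⟩ := this
      have : x ∈ S ∩ pts U := ⟨hxS, hxU⟩
      rw [hg S hS] at this
      exact ⟨S, hS, this.symm⟩
    · rintro ⟨S, hS, rfl⟩
      have := hgmem S hS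
      exact ⟨lset_sub_K hS.1 this.1, this.2⟩
  have hinjOn : Set.InjOn g (NL K p) := by
    intro S hS T hT hgST
    by_contra hne'
    have h1 := hgmem S hS
    have h2 := hgmem T hT
    have : g S ∈ S ∩ T := ⟨h1.1, hgST ▸ h2.1⟩
    rw [NL_inter hS hT hne'] at this
    rcases this with rfl
    exact hpU h1.2
  have hEcard : (K ∩ pts U).ncard = q + 2 := by
    rw [hEeq, Set.ncard_image_of_injOn hinjOn, hr]
  -- now contradict the allowed section types of the solid U
  rcases hG U hrkU with ⟨S1, S2, S3, h1, h2, h3', heq⟩ | ⟨f, hf, heq⟩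
  · have hsub : ∀ X Y : Set (PGPt F 4), X ∈ Lset K → Y ∈ Lset K → X ≠ Y →
        X ∪ Y ⊆ K ∩ pts U → False := by
      intro X Y hX hY hXY hsub
      have := two_lines_ncard hq hX hY hXY
      have hle := Set.ncard_le_ncard hsub (Set.toFinite _)
      omega
    by_cases e12 : S1 = S2
    · by_cases e13 : S1 = S3
      · rw [← e12, ← e13, Set.union_self, Set.union_self] at heq
        rw [heq, line_ncard hq h1] at hEcard
        omega
      · refine hsub S1 S3 h1 h3' e13 ?_
        rw [heq]
        intro x hx
        rcases hx with h | h
        · exact Or.inl (Or.inl h)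
        · exact Or.inr h
    · refine hsub S1 S2 h1 h2 e12 ?_
      rw [heq]
      intro x hx
      rcases hx with h | h
      · exact Or.inl (Or.inl h)
      · exact Or.inl (Or.inr h)
  · have htcc := tc_ncard_le (V := Fin (4+1) → F) hf
    rw [← heq, hEcard, hq] at htcc
    omega

lemma vertex_eq (hG : GoodSolids K) (hq : Fintype.card F = q) (h3 : 3 ≤ q)
    (hK : K.ncard = q^2 + 2*q + 1) {p : PGPt F 4} (hp : q + 1 ≤ (NL K p).ncard) :
    (NL K p).ncard = q + 1 := by
  have h1 := vertex_le hq h3 hK hp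
  by_cases h : (NL K p).ncard = q + 2
  · exact absurd h (fun hh => not_vertex_q2 hG hq h3 hK hh)
  · omega

end master4
end PGaux
namespace PGaux
section master5
variable {F : Type} [Field F] [Fintype F]
variable {q : ℕ} {K : Set (PGPt F 4)}

lemma vertex_spread (hG : GoodSolids K) (hq : Fintype.card F = q) (h3 : 3 ≤ q)
    (hK : K.ncard = q^2 + 2*q + 1) {p : PGPt F 4} (hvp : q + 1 ≤ (NL K p).ncard)
    {w : PGPt F 4} (hw : w ∈ K) (hwc : w ∉ cone K p) : q + 1 ≤ (NL K w).ncard := by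
  classical
  by_contra hnw
  push_neg at hnw
  have hrp : (NL K p).ncard = q + 1 := vertex_eq hG hq h3 hK hvp
  -- for each line S through p, a line through w in a common plane with S
  have hchoice : ∀ S : Set (PGPt F 4), ∃ n : Set (PGPt F 4),
      ∃ Wπ : Submodule F (Fin (4+1) → F), S ∈ NL K p →
      (n ∈ NL K w ∧ finrank F Wπ = 3 ∧ S ⊆ pts Wπ ∧ w.submodule ≤ Wπ ∧ n ⊆ pts Wπ) := by
    intro S
    by_cases hS : S ∈ NL K p
    · have hwS : w ∉ S := fun hmem => hwc ⟨S, hS, hmem⟩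
      rcases F4 hG hq h3 hS.1 hw hwS with ⟨n, hn, Wπ, h1, h2, h3', h4⟩ | hbig
      · exact ⟨n, Wπ, fun _ => ⟨hn, h1, h2, h3', h4⟩⟩
      · omega
    · exact ⟨S, ⊥, fun h' => absurd h' hS⟩
  choose n π hn using hchoice
  have hnotinj : ¬ Set.InjOn n (NL K p) := by
    intro hinj
    have himg : n '' (NL K p) ⊆ NL K w := by
      rintro x ⟨S, hS, rfl⟩
      exact (hn S hS).1
    have := Set.ncard_le_ncard himg (Set.toFinite _)
    rw [Set.ncard_image_of_injOn hinj, hrp] at this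
    omega
  rw [Set.InjOn] at hnotinj
  push_neg at hnotinj
  obtain ⟨S, hS, T, hT, hST, hSTne⟩ := hnotinj
  obtain ⟨hn1, hπ3, hSsub, hwsub, hnsub⟩ := hn S hS
  obtain ⟨hn1', hπ3', hTsub, hwsub', hnsub'⟩ := hn T hT
  set N := n S with hN
  have hNT : n T = N := hST.symm ▸ rfl
  rw [hNT] at hn1' hnsub'
  have hwN : w ∈ N := hn1.2
  have hpN : p ∉ N := by
    intro hpmem
    exact hwc ⟨N, ⟨hn1.1, hpmem⟩, hwN⟩
  have hSneN : S ≠ N := fun h => hpN (h ▸ hS.2)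
  have hTneN : T ≠ N := fun h => hpN (h ▸ hT.2)
  -- the two planes must coincide
  have hππ : π S = π T := by
    by_contra hππne
    obtain ⟨x, hx, y, hy, hxy⟩ := exists_two_distinct
      (S := N) (by rw [line_ncard hq hn1.1]; omega)
    obtain ⟨WN, hWN2, hNeq, -⟩ := lset_spec hn1.1
    rw [hNeq] at hx hy
    have hWNeq : WN = x.submodule ⊔ y.submodule := line_eq_sup hWN2 hxy hx hy
    have hpWN : p ∉ pts WN := by rw [← hNeq]; exact hpN
    have hW'3 : finrank F ((WN ⊔ p.submodule : Submodule F (Fin (4+1) → F))) = 3 := by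
      rw [finrank_sup_point hpWN, hWN2]
    have hle : ∀ Wp' : Submodule F (Fin (4+1) → F), finrank F Wp' = 3 → N ⊆ pts Wp' →
        p.submodule ≤ Wp' → WN ⊔ p.submodule = Wp' := by
      intro Wp' h3'' hNsub hpsub
      apply Submodule.eq_of_le_of_finrank_eq
      · apply sup_le _ hpsub
        rw [hWNeq]
        exact sup_le (hNsub (hNeq ▸ hx)) (hNsub (hNeq ▸ hy))
      · rw [hW'3, h3'']
    have e1 : WN ⊔ p.submodule = π S := hle (π S) hπ3 hnsub
      (le_trans (show p.submodule ≤ _ from hSsub hS.2) le_rfl)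
    have e2 : WN ⊔ p.submodule = π T := hle (π T) hπ3' hnsub'
      (le_trans (show p.submodule ≤ _ from hTsub hT.2) le_rfl)
    exact hππne (e1 ▸ e2)
  -- three coplanar lines: contradiction
  refine no3cop hG hq h3 hK hπ3 hS.1 hT.1 hn1.1 hSTne hSneN hTneN hSsub ?_ ?_
  · rw [hππ]; exact hTsub
  · exact hnsub

lemma A3 (hG : GoodSolids K) (hq : Fintype.card F = q) (h3 : 3 ≤ q)
    (hK : K.ncard = q^2 + 2*q + 1) {p p' : PGPt F 4}
    (hvp : q + 1 ≤ (NL K p).ncard) (hvp' : q + 1 ≤ (NL K p').ncard)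
    (hpc : p' ∉ cone K p) (hpc' : p ∉ cone K p') : False := by
  classical
  have hq2 : q^2 = q*q := sq q
  have hr := vertex_eq hG hq h3 hK hvp
  have hr' := vertex_eq hG hq h3 hK hvp'
  have hnep : (NL K p).Nonempty := Set.nonempty_of_ncard_ne_zero (by omega)
  have hnep' : (NL K p').Nonempty := Set.nonempty_of_ncard_ne_zero (by omega)
  have hc := cone_ncard hq hnep
  have hc' := cone_ncard hq hnep'
  rw [hr] at hc; rw [hr'] at hc'
  have hcp : (cone K p).ncard = q*q + q + 1 := by rw [hc]; ring
  have hcp' : (cone K p').ncard = q*q + q + 1 := by rw [hc']; ring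
  have hKq : K.ncard = q*q + 2*q + 1 := by rw [hK]; ring
  have hZcard : q*q + 1 ≤ (cone K p ∩ cone K p').ncard := by
    have hiu := Set.ncard_inter_add_ncard_union (cone K p) (cone K p')
      (Set.toFinite _) (Set.toFinite _)
    have huK : (cone K p ∪ cone K p').ncard ≤ K.ncard :=
      Set.ncard_le_ncard (Set.union_subset cone_sub cone_sub) (Set.toFinite _)
    omega
  set Z := cone K p ∩ cone K p' with hZ
  -- find a line through p' with ≥ 3 points of Z
  have hfin' : (NL K p').Finite := Set.toFinite _
  obtain ⟨nn, hnn, hnn3⟩ : ∃ nn ∈ NL K p', 3 ≤ (Z ∩ nn).ncard := by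
    by_contra hcon
    push_neg at hcon
    have hZsub : Z ⊆ ⋃ nn ∈ hfin'.toFinset, (Z ∩ nn) := by
      intro x hx
      obtain ⟨S, hS, hxS⟩ := hx.2
      exact Set.mem_biUnion (hfin'.mem_toFinset.mpr hS) ⟨hx, hxS⟩
    have hb := le_trans (Set.ncard_le_ncard hZsub (Set.toFinite _))
      (ncard_biUnion_le hfin'.toFinset _)
    have hsmall : ∀ nn ∈ hfin'.toFinset, (Z ∩ nn).ncard ≤ 2 := by
      intro nn hmem
      have := hcon nn (hfin'.mem_toFinset.mp hmem)
      omega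
    have hsums := Finset.sum_le_sum hsmall
    rw [Finset.sum_const, smul_eq_mul] at hsums
    have hTc : hfin'.toFinset.card = q + 1 := by
      rw [← Set.ncard_eq_toFinset_card _ hfin', hr']
    rw [hTc] at hsums
    have hql : 3*q ≤ q*q := Nat.mul_le_mul_right q h3
    have hexp : (q+1)*2 = 2*q + 2 := by ring
    omega
  obtain ⟨x1, hx1, x2, hx2, x3, hx3, h12, h13, h23⟩ := exists_three_distinct hnn3
  have hpnn : p ∉ nn := fun h => hpc' ⟨nn, hnn, h⟩
  obtain ⟨WN, hWN2, hNeq, -⟩ := lset_spec hnn.1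
  have hpWN : p ∉ pts WN := by rw [← hNeq]; exact hpnn
  have hπ3 : finrank F ((WN ⊔ p.submodule : Submodule F (Fin (4+1) → F))) = 3 := by
    rw [finrank_sup_point hpWN, hWN2]
  -- the lines of the cone of p through the xᵢ
  have hline : ∀ x : PGPt F 4, x ∈ Z ∩ nn → ∃ m ∈ NL K p, x ∈ m ∧
      m ⊆ pts (WN ⊔ p.submodule) := by
    intro x hx
    obtain ⟨m, hm, hxm⟩ := hx.1.1
    refine ⟨m, hm, hxm, ?_⟩
    obtain ⟨Wm, hWm2, hmeq, -⟩ := lset_spec hm.1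
    have hxp : x ≠ p := fun h => hpnn (h ▸ hx.2)
    have hWmeq : Wm = x.submodule ⊔ p.submodule :=
      line_eq_sup hWm2 hxp (hmeq ▸ hxm) (hmeq ▸ hm.2)
    rw [hmeq]
    apply pts_mono
    rw [hWmeq]
    apply sup_le _ le_sup_right
    have hxW : x ∈ pts WN := hNeq ▸ hx.2
    exact le_trans hxW le_sup_left
  obtain ⟨m1, hm1, hxm1, hs1⟩ := hline x1 hx1
  obtain ⟨m2, hm2, hxm2, hs2⟩ := hline x2 hx2
  obtain ⟨m3, hm3, hxm3, hs3⟩ := hline x3 hx3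
  have hmne : ∀ mi mj : Set (PGPt F 4), mi ∈ NL K p → mj ∈ NL K p →
      ∀ xi xj : PGPt F 4, xi ≠ xj → xi ∈ Z ∩ nn → xj ∈ Z ∩ nn →
      xi ∈ mi → xj ∈ mj → mi = mj → False := by
    intro mi mj hmi hmj xi xj hxij hxiZ hxjZ hximi hxjmj hequ
    rw [hequ] at hximi
    have : mj = nn := line_two_pts hmj.1 hnn.1 hxij hximi hxjmj hxiZ.2 hxjZ.2
    exact hpnn (this ▸ hmj.2)
  have hne12 : m1 ≠ m2 := fun h => hmne m1 m2 hm1 hm2 x1 x2 h12 hx1 hx2 hxm1 (h ▸ hxm2) h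
  have hne13 : m1 ≠ m3 := fun h => hmne m1 m3 hm1 hm3 x1 x3 h13 hx1 hx3 hxm1 (h ▸ hxm3) h
  have hne23 : m2 ≠ m3 := fun h => hmne m2 m3 hm2 hm3 x2 x3 h23 hx2 hx3 hxm2 (h ▸ hxm3) h
  exact no3cop hG hq h3 hK hπ3 hm1.1 hm2.1 hm3.1 hne12 hne13 hne23 hs1 hs2 hs3

lemma caseA (hG : GoodSolids K) (hq : Fintype.card F = q) (h3 : 3 ≤ q)
    (hK : K.ncard = q^2 + 2*q + 1) {p : PGPt F 4} (hvp : q + 1 ≤ (NL K p).ncard) :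
    False := by
  have hq2 : q^2 = q*q := sq q
  have hr := vertex_eq hG hq h3 hK hvp
  have hnep : (NL K p).Nonempty := Set.nonempty_of_ncard_ne_zero (by omega)
  have hc := cone_ncard hq hnep
  rw [hr] at hc
  have hdiffcard : (K \ cone K p).ncard = K.ncard - (cone K p).ncard :=
    Set.ncard_diff cone_sub (Set.toFinite _)
  have hmm : (q+1)*q = q*q + q := by ring
  obtain ⟨w, hw⟩ : (K \ cone K p).Nonempty := by
    apply Set.nonempty_of_ncard_ne_zero
    rw [hdiffcard, hK, hc]
    omega
  have hvw := vertex_spread hG hq h3 hK hvp hw.1 hw.2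
  have hpw : p ∉ cone K w := by
    rintro ⟨nw, hnw, hpnw⟩
    exact hw.2 ⟨nw, ⟨hnw.1, hpnw⟩, hnw.2⟩
  exact A3 hG hq h3 hK hvp hvw hw.2 hpw

end master5
end PGaux
namespace PGaux
section master6
variable {F : Type} [Field F] [Fintype F]
variable {q : ℕ} {K : Set (PGPt F 4)}

lemma caseB (hG : GoodSolids K) (hq : Fintype.card F = q) (h3 : 3 ≤ q)
    (hK : K.ncard = q^2 + 2*q + 1) (hnovx : ∀ p : PGPt F 4, ¬ (q + 1 ≤ (NL K p).ncard)) :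
    False := by
  classical
  have hq2 : q^2 = q*q := sq q
  have hql : 3*q ≤ q*q := Nat.mul_le_mul_right q h3
  have hcov := cover_lemma hG hq h3 hK
  by_cases hskew : ∃ S ∈ Lset K, ∃ T ∈ Lset K, S ∩ T = ∅
  · -- skew case
    obtain ⟨S, hS, T, hT, hdisj⟩ := hskew
    obtain ⟨Wl, hWl2, hSeq, -⟩ := lset_spec hS
    obtain ⟨Wm, hWm2, hTeq, -⟩ := lset_spec hT
    have hinf : Wl ⊓ Wm = ⊥ := by
      by_contra hne
      obtain ⟨v, hv, hv0⟩ := Submodule.exists_mem_ne_zero_of_ne_bot hne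
      have hmk : Projectivization.mk F v hv0 ∈ S ∩ T := by
        constructor
        · rw [hSeq]; exact (mk_mem_pts hv0).mpr (hv.1)
        · rw [hTeq]; exact (mk_mem_pts hv0).mpr (hv.2)
      rw [hdisj] at hmk
      exact hmk
    have hsup4 : finrank F ((Wl ⊔ Wm : Submodule F (Fin (4+1) → F))) = 4 := by
      have := Submodule.finrank_sup_add_finrank_inf_eq Wl Wm
      rw [hinf, hWl2, hWm2] at this
      simpa using this
    -- for each point x of T there is a line of K through x lying in a plane with S
    have hchoice : ∀ x : PGPt F 4, ∃ n : Set (PGPt F 4),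
        ∃ Wπ : Submodule F (Fin (4+1) → F), x ∈ T →
        (n ∈ NL K x ∧ finrank F Wπ = 3 ∧ S ⊆ pts Wπ ∧ Wπ ≤ Wl ⊔ Wm ∧ n ⊆ pts Wπ) := by
      intro x
      by_cases hxT : x ∈ T
      · have hxK : x ∈ K := lset_sub_K hT hxT
        have hxS : x ∉ S := by
          intro hxS
          have hh : x ∈ S ∩ T := ⟨hxS, hxT⟩
          rw [hdisj] at hh
          exact hh
        rcases F4 hG hq h3 hS hxK hxS with ⟨n, hn, Wπ, hπ3, hSπ, hxπ, hnπ⟩ | hbig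
        · refine ⟨n, Wπ, fun _ => ⟨hn, hπ3, hSπ, ?_, hnπ⟩⟩
          have hWlπ : Wl ≤ Wπ := by
            rw [← pts_le_iff, ← hSeq]
            exact hSπ
          have hxWl : x ∉ pts Wl := by rw [← hSeq]; exact hxS
          have hπeq : Wl ⊔ x.submodule = Wπ := by
            apply Submodule.eq_of_le_of_finrank_eq (sup_le hWlπ hxπ)
            rw [finrank_sup_point hxWl, hWl2, hπ3]
          rw [← hπeq]
          apply sup_le le_sup_left
          have hxWm : x ∈ pts Wm := hTeq ▸ hxT
          exact le_trans hxWm le_sup_right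
        · exact absurd hbig (hnovx x)
      · exact ⟨S, ⊥, fun h => absurd h hxT⟩
    choose nf pf hnf using hchoice
    -- pigeonhole : the map x ↦ nf x on T cannot be injective
    obtain ⟨T1, T2, T3, hT1, hT2, hT3, heq⟩ := good_solid_line hG hq h3 hsup4 hS
      (by rw [hSeq]; exact pts_mono le_sup_left)
    have himg : ∀ x ∈ T, nf x ∈ ({T1, T2, T3} : Set (Set (PGPt F 4))) := by
      intro x hxT
      obtain ⟨hn, hπ3, hSπ, hπle, hnπ⟩ := hnf x hxT
      have : nf x = T1 ∨ nf x = T2 ∨ nf x = T3 := by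
        apply line_in_union3 hq h3 hn.1 hT1.1 hT2.1 hT3.1
        rw [← heq]
        exact fun y hy => ⟨lset_sub_K hn.1 hy, pts_mono hπle (hnπ hy)⟩
      simpa using this
    have hnoinj : ¬ Set.InjOn nf T := by
      intro hinj
      have h1 : (nf '' T).ncard = q + 1 := by
        rw [Set.ncard_image_of_injOn hinj, line_ncard hq hT]
      have h2 : (nf '' T).ncard ≤ 3 := by
        have hsub : nf '' T ⊆ {T1, T2, T3} := by
          rintro y ⟨x, hx, rfl⟩
          exact himg x hx
        refine le_trans (Set.ncard_le_ncard hsub (Set.toFinite _)) ?_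
        refine le_trans (Set.ncard_insert_le _ _) ?_
        have := Set.ncard_insert_le T2 ({T3} : Set (Set (PGPt F 4)))
        simp only [Set.ncard_singleton] at this ⊢
        omega
      omega
    rw [Set.InjOn] at hnoinj
    push_neg at hnoinj
    obtain ⟨x, hx, y, hy, hnxy, hxyne⟩ := hnoinj
    obtain ⟨hnx, -, -, -, -⟩ := hnf x hx
    obtain ⟨hny, hπ3y, hSπy, -, hnπy⟩ := hnf y hy
    rw [hnxy] at hnx
    -- nf y contains x and y, two distinct points of T, hence nf y = T
    have hTeq' : nf y = T := line_two_pts hny.1 hT hxyne hnx.2 hny.2 hx hy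
    -- so T lies in the plane pf y, together with S : rank 4 ≤ 3
    have hWm_le : Wm ≤ pf y := by
      rw [← pts_le_iff, ← hTeq, ← hTeq']
      exact hnπy
    have hWl_le : Wl ≤ pf y := by
      rw [← pts_le_iff, ← hSeq]
      exact hSπy
    have hle : Wl ⊔ Wm ≤ pf y := sup_le hWl_le hWm_le
    have := Submodule.finrank_mono hle
    rw [hsup4, hπ3y] at this
    omega
  · -- all lines of K pairwise intersect
    push_neg at hskew
    have hmeet : ∀ S ∈ Lset K, ∀ T ∈ Lset K, (S ∩ T).Nonempty := by
      intro S hS T hT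
      exact hskew S hS T hT
    have hKne : K.Nonempty := by
      apply Set.nonempty_of_ncard_ne_zero
      rw [hK]; omega
    obtain ⟨p0, hp0⟩ := hKne
    obtain ⟨S0, hS0, hp0S0⟩ := hcov p0 hp0
    by_cases halleq : ∀ S ∈ Lset K, S = S0
    · -- K is contained in a single line
      have hsub : K ⊆ S0 := by
        intro x hxK
        obtain ⟨Sx, hSx, hxSx⟩ := hcov x hxK
        rw [← halleq Sx hSx]
        exact hxSx
      have := Set.ncard_le_ncard hsub (Set.toFinite _)
      rw [hK, line_ncard hq hS0] at this
      omega
    · push_neg at halleq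
      obtain ⟨S1, hS1, hS1ne⟩ := halleq
      obtain ⟨A, hA⟩ := hmeet S1 hS1 S0 hS0
      -- every line of K passes through A
      have hallA : ∀ T ∈ Lset K, A ∈ T := by
        intro T hT
        by_contra hAT
        have hTne1 : T ≠ S1 := fun h => hAT (h ▸ hA.1)
        have hTne0 : T ≠ S0 := fun h => hAT (h ▸ hA.2)
        obtain ⟨B, hB⟩ := hmeet T hT S1 hS1
        obtain ⟨C, hC⟩ := hmeet T hT S0 hS0
        have hBA : B ≠ A := fun h => hAT (h ▸ hB.1)
        have hCA : C ≠ A := fun h => hAT (h ▸ hC.1)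
        have hBC : B ≠ C := by
          intro h
          apply hS1ne
          exact line_two_pts hS1 hS0 (h ▸ hBA) hB.2 hA.1 (h ▸ hC.2) hA.2
        obtain ⟨W1, hW12, hS1eq, -⟩ := lset_spec hS1
        obtain ⟨W0, hW02, hS0eq, -⟩ := lset_spec hS0
        have hinf1 : finrank F ((W1 ⊓ W0 : Submodule F (Fin (4+1) → F))) = 1 := by
          have hup : finrank F ((W1 ⊓ W0 : Submodule F (Fin (4+1) → F))) ≤ 2 := by
            have := Submodule.finrank_mono (inf_le_left : W1 ⊓ W0 ≤ W1)
            omega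
          have hlow : 1 ≤ finrank F ((W1 ⊓ W0 : Submodule F (Fin (4+1) → F))) := by
            have hA1 : A ∈ pts W1 := hS1eq ▸ hA.1
            have hA0 : A ∈ pts W0 := hS0eq ▸ hA.2
            have hAmem : A.submodule ≤ W1 ⊓ W0 := le_inf hA1 hA0
            have := Submodule.finrank_mono hAmem
            rw [A.finrank_submodule] at this
            omega
          rcases Nat.lt_or_ge (finrank F ((W1 ⊓ W0 : Submodule F (Fin (4+1) → F)))) 2
              with h | h
          · omega
          · exfalso
            have h2 : finrank F ((W1 ⊓ W0 : Submodule F (Fin (4+1) → F))) = 2 := by omega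
            have e1 : W1 ⊓ W0 = W1 :=
              Submodule.eq_of_le_of_finrank_eq inf_le_left (by rw [h2, hW12])
            have e0 : W1 ⊓ W0 = W0 :=
              Submodule.eq_of_le_of_finrank_eq inf_le_right (by rw [h2, hW02])
            apply hS1ne
            rw [hS1eq, hS0eq, ← e1, e0]
        have hπ3 : finrank F ((W1 ⊔ W0 : Submodule F (Fin (4+1) → F))) = 3 := by
          have := Submodule.finrank_sup_add_finrank_inf_eq W1 W0
          rw [hinf1, hW12, hW02] at this
          omega
        obtain ⟨WT, hWT2, hTeq, -⟩ := lset_spec hT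
        have hWTeq : WT = B.submodule ⊔ C.submodule :=
          line_eq_sup hWT2 hBC (hTeq ▸ hB.1) (hTeq ▸ hC.1)
        have hTsub : T ⊆ pts (W1 ⊔ W0) := by
          rw [hTeq]
          apply pts_mono
          rw [hWTeq]
          apply sup_le
          · have hB1 : B ∈ pts W1 := hS1eq ▸ hB.2
            exact le_trans hB1 le_sup_left
          · have hC0 : C ∈ pts W0 := hS0eq ▸ hC.2
            exact le_trans hC0 le_sup_right
        refine no3cop hG hq h3 hK hπ3 hS1 hS0 hT hS1ne hTne1.symm hTne0.symm ?_ ?_ hTsub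
        · rw [hS1eq]; exact pts_mono le_sup_left
        · rw [hS0eq]; exact pts_mono le_sup_right
      -- so K is inside the cone of A
      have hKcone : K ⊆ cone K A := by
        intro x hxK
        obtain ⟨Sx, hSx, hxSx⟩ := hcov x hxK
        exact ⟨Sx, ⟨hSx, hallA Sx hSx⟩, hxSx⟩
      have hne : (NL K A).Nonempty := ⟨S1, hS1, hallA S1 hS1⟩
      have hcA := cone_ncard hq hne
      have hr : (NL K A).ncard ≤ q := by
        have := hnovx A
        omega
      have hcle := Set.ncard_le_ncard hKcone (Set.toFinite _)
      rw [hcA, hK] at hcle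
      have : (NL K A).ncard * q ≤ q * q := Nat.mul_le_mul_right q hr
      omega

lemma main_contradiction (hG : GoodSolids K) (hq : Fintype.card F = q) (h3 : 3 ≤ q)
    (hK : K.ncard = q^2 + 2*q + 1) : False := by
  by_cases hvx : ∃ p : PGPt F 4, q + 1 ≤ (NL K p).ncard
  · obtain ⟨p, hp⟩ := hvx
    exact caseA hG hq h3 hK hp
  · push_neg at hvx
    exact caseB hG hq h3 hK (fun p => by have := hvx p; omega)

end master6
end PGaux
/-- `K` contains at least one non-degenerate conic. -/
theorem stmt1 (q : ℕ) (hq : Fintype.card F = q) (h3 : 3 ≤ q) (K : Set (PGPt F 4))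
    (hK : K.ncard = q ^ 2 + 2 * q + 1) (hyp : FiveTypeHyp F K) :
    ∃ C : Set (PGPt F 4), IsConic F 4 C ∧ C ⊆ K := by
  classical
  by_contra hcon
  push_neg at hcon
  have hG : PGaux.GoodSolids K := by
    intro W hW
    have hsolid : IsSolid F (PGaux.pts W) := ⟨W, by rw [hW], rfl⟩
    rcases hyp (PGaux.pts W) hsolid with ⟨ℓ, hl, heq⟩ | ⟨ℓ, m, hl, hm, hne, heq⟩ |
      ⟨ℓ, m, n, hl, hm, hn, h1, h2, h3', heq⟩ | ⟨ℓ, C, hl, hC, heq⟩ | ⟨C, hC, heq⟩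
    · left
      have hsub : ℓ ⊆ K := by
        intro x hx; rw [← heq] at hx; exact hx.1
      exact ⟨ℓ, ℓ, ℓ, ⟨hl, hsub⟩, ⟨hl, hsub⟩, ⟨hl, hsub⟩, by
        rw [Set.union_self, Set.union_self]; exact heq⟩
    · left
      have hsubl : ℓ ⊆ K := by
        intro x hx
        have : x ∈ K ∩ PGaux.pts W := by rw [heq]; exact Or.inl hx
        exact this.1
      have hsubm : m ⊆ K := by
        intro x hx
        have : x ∈ K ∩ PGaux.pts W := by rw [heq]; exact Or.inr hx
        exact this.1
      exact ⟨ℓ, ℓ, m, ⟨hl, hsubl⟩, ⟨hl, hsubl⟩, ⟨hm, hsubm⟩, by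
        rw [Set.union_self]; exact heq⟩
    · left
      have hsubl : ℓ ⊆ K := by
        intro x hx
        have : x ∈ K ∩ PGaux.pts W := by rw [heq]; exact Or.inl (Or.inl hx)
        exact this.1
      have hsubm : m ⊆ K := by
        intro x hx
        have : x ∈ K ∩ PGaux.pts W := by rw [heq]; exact Or.inl (Or.inr hx)
        exact this.1
      have hsubn : n ⊆ K := by
        intro x hx
        have : x ∈ K ∩ PGaux.pts W := by rw [heq]; exact Or.inr hx
        exact this.1
      exact ⟨ℓ, m, n, ⟨hl, hsubl⟩, ⟨hm, hsubm⟩, ⟨hn, hsubn⟩, heq⟩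
    · exfalso
      apply hcon C hC
      intro x hx
      have : x ∈ K ∩ PGaux.pts W := by rw [heq]; exact Or.inr hx
      exact this.1
    · right
      obtain ⟨f, hf, hCeq⟩ := hC
      exact ⟨f, hf, by rw [heq, hCeq]; rfl⟩
  exact (PGaux.main_contradiction hG hq h3 hK).elim
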